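/- arXiv:2409.18510 — 10 statements merged into one kernel-verified Lean document; each statement's English description precedes it below -/
import Mathlib

section
/- Let m ≥ 3 and n ≥ 6 with n ≡ 0 (mod 6) and m ≡ 0 (mod 3). Then the 2-rainbow domination number of the Cartesian product of cycles satisfies γ_{r2}(C_m □ C_n) = (m/3)·n. -/
open SimpleGraph Finset

/-- `f` is a `k`-rainbow dominating function of `G`: every vertex with empty label
sees all `k` colors in its open neighborhood. -/
def IsRainbowDominating {V : Type*} (G : SimpleGraph V) (k : ℕ)
    (f : V → Finset (Fin k)) : Prop :=
  ∀ v, f v = ∅ → ∀ c : Fin k, ∃ u, G.Adj v u ∧ c ∈ f u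

/-- The `k`-rainbow domination number: the minimum weight of a `k`-rainbow
dominating function. -/
noncomputable def rainbowDomNum {V : Type*} [Fintype V] (G : SimpleGraph V) (k : ℕ) : ℕ :=
  sInf {w | ∃ f : V → Finset (Fin k), IsRainbowDominating G k f ∧ w = ∑ v, (f v).card}

def fconstr (m n : ℕ) : Fin m × Fin n → Finset (Fin 2) := fun p =>
  if (2 * p.1.val + p.2.val) % 6 = 0 then {0}
  else if (2 * p.1.val + p.2.val) % 6 = 3 then {1} else ∅

lemma fin_val_one (N : ℕ) [NeZero N] (hN : 2 ≤ N) : (1 : Fin N).val = 1 := by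
  rw [Fin.val_one']
  exact Nat.mod_eq_of_lt (by omega)

lemma cyc_adj_add (N : ℕ) [NeZero N] (hN : 2 ≤ N) (j : Fin N) : (cycleGraph N).Adj j (j + 1) := by
  rw [cycleGraph_adj']
  right
  rw [add_sub_cancel_left]
  exact fin_val_one N hN

lemma cyc_adj_sub (N : ℕ) [NeZero N] (hN : 2 ≤ N) (j : Fin N) : (cycleGraph N).Adj j (j - 1) := by
  rw [cycleGraph_adj']
  left
  rw [sub_sub_cancel]
  exact fin_val_one N hN

lemma val_add_one (N : ℕ) [NeZero N] (hN : 2 ≤ N) (j : Fin N) : (j + 1).val = (j.val + 1) % N := by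
  rw [Fin.add_def, fin_val_one N hN]

lemma val_sub_one (N : ℕ) [NeZero N] (hN : 2 ≤ N) (j : Fin N) : (j - 1).val = (N - 1 + j.val) % N := by
  rw [Fin.sub_def, fin_val_one N hN]

lemma mod_shift (x N d : ℕ) (hN : 0 < N) (hd : N % d = 0) (hd0 : 0 < d) :
    ∃ k, x % N + d * k = x := by
  refine ⟨(N / d) * (x / N), ?_⟩
  have e : d * (N / d) = N := Nat.mul_div_cancel' (Nat.dvd_of_mod_eq_zero hd) -- d ∣ N
  have h := Nat.mod_add_div x N
  have : d * (N / d * (x / N)) = N * (x / N) := by rw [← mul_assoc, e]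
  omega

lemma fconstr_dom (m n : ℕ) (hm : 3 ≤ m) (hn : 6 ≤ n)
    (hn6 : n % 6 = 0) (hm3 : m % 3 = 0) :
    IsRainbowDominating (cycleGraph m □ cycleGraph n) 2 (fconstr m n) := by
  haveI : NeZero m := ⟨by omega⟩
  haveI : NeZero n := ⟨by omega⟩
  rintro ⟨i, j⟩ hv c
  simp only [fconstr] at hv
  split_ifs at hv with h0 h3
  · exact absurd hv (by simp)
  · exact absurd hv (by simp)
  have hiv : i.val < m := i.isLt
  have hjv : j.val < n := j.isLt
  have hadd_i := val_add_one m (by omega) i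
  have hsub_i := val_sub_one m (by omega) i
  have hadd_j := val_add_one n (by omega) j
  have hsub_j := val_sub_one n (by omega) j
  obtain ⟨ka, hka⟩ := mod_shift (i.val + 1) m 3 (by omega) hm3 (by omega)
  obtain ⟨kb, hkb⟩ := mod_shift (m - 1 + i.val) m 3 (by omega) hm3 (by omega)
  obtain ⟨kc, hkc⟩ := mod_shift (j.val + 1) n 6 (by omega) hn6 (by omega)
  obtain ⟨kd, hkd⟩ := mod_shift (n - 1 + j.val) n 6 (by omega) hn6 (by omega)
  have adj_i_add : (cycleGraph m □ cycleGraph n).Adj (i, j) (i + 1, j) :=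
    Or.inl ⟨cyc_adj_add m (by omega) i, rfl⟩
  have adj_i_sub : (cycleGraph m □ cycleGraph n).Adj (i, j) (i - 1, j) :=
    Or.inl ⟨cyc_adj_sub m (by omega) i, rfl⟩
  have adj_j_add : (cycleGraph m □ cycleGraph n).Adj (i, j) (i, j + 1) :=
    Or.inr ⟨cyc_adj_add n (by omega) j, rfl⟩
  have adj_j_sub : (cycleGraph m □ cycleGraph n).Adj (i, j) (i, j - 1) :=
    Or.inr ⟨cyc_adj_sub n (by omega) j, rfl⟩
  have hr : (2 * i.val + j.val) % 6 = 1 ∨ (2 * i.val + j.val) % 6 = 2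
      ∨ (2 * i.val + j.val) % 6 = 4 ∨ (2 * i.val + j.val) % 6 = 5 := by omega
  have mem0 : ∀ u : Fin m × Fin n, (2 * u.1.val + u.2.val) % 6 = 0 →
      (0 : Fin 2) ∈ fconstr m n u := by intro u hu; simp [fconstr, hu]
  have mem1 : ∀ u : Fin m × Fin n, (2 * u.1.val + u.2.val) % 6 = 3 →
      (1 : Fin 2) ∈ fconstr m n u := by intro u hu; simp [fconstr, hu]
  fin_cases c
  · rcases hr with h | h | h | h
    · exact ⟨(i, j - 1), adj_j_sub, mem0 _ (by simp only [hsub_j]; omega)⟩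
    · exact ⟨(i - 1, j), adj_i_sub, mem0 _ (by simp only [hsub_i]; omega)⟩
    · exact ⟨(i + 1, j), adj_i_add, mem0 _ (by simp only [hadd_i]; omega)⟩
    · exact ⟨(i, j + 1), adj_j_add, mem0 _ (by simp only [hadd_j]; omega)⟩
  · rcases hr with h | h | h | h
    · exact ⟨(i + 1, j), adj_i_add, mem1 _ (by simp only [hadd_i]; omega)⟩
    · exact ⟨(i, j + 1), adj_j_add, mem1 _ (by simp only [hadd_j]; omega)⟩
    · exact ⟨(i, j - 1), adj_j_sub, mem1 _ (by simp only [hsub_j]; omega)⟩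
    · exact ⟨(i - 1, j), adj_i_sub, mem1 _ (by simp only [hsub_i]; omega)⟩

lemma sum_range_mod6 (g : ℕ → ℕ) (k : ℕ) :
    ∑ j ∈ Finset.range (6 * k), g (j % 6) = k * ∑ j ∈ Finset.range 6, g j := by
  induction k with
  | zero => simp
  | succ k ih =>
    rw [show 6*(k+1) = (6*k) + 1 + 1 + 1 + 1 + 1 + 1 by ring]
    rw [Finset.sum_range_succ, Finset.sum_range_succ, Finset.sum_range_succ,
      Finset.sum_range_succ, Finset.sum_range_succ, Finset.sum_range_succ, ih]
    have h : ∀ r, (6*k + r) % 6 = r % 6 := fun r => Nat.mul_add_mod 6 k r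
    rw [show 6*k+1+1 = 6*k+2 by ring, show 6*k+1+1+1 = 6*k+3 by ring,
      show 6*k+1+1+1+1 = 6*k+4 by ring, show 6*k+1+1+1+1+1 = 6*k+5 by ring,
      h 1, h 2, h 3, h 4, h 5, show (6*k) % 6 = 0 % 6 from h 0]
    simp [Finset.sum_range_succ]
    ring

lemma row_sum (a : ℕ) :
    ∑ b ∈ Finset.range 6, (if (2*a + b) % 6 = 0 then 1 else if (2*a + b) % 6 = 3 then 1 else 0) = 2 := by
  have hc : ∀ b, (if (2*a + b) % 6 = 0 then 1 else if (2*a + b) % 6 = 3 then 1 else 0)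
      = (if (2*(a % 3) + b) % 6 = 0 then 1 else if (2*(a % 3) + b) % 6 = 3 then (1:ℕ) else 0) := by
    intro b
    have h1 : (2*a + b) % 6 = (2*(a % 3) + b) % 6 := by omega
    rw [h1]
  rw [Finset.sum_congr rfl (fun b _ => hc b)]
  have key : ∀ r < 3, ∑ b ∈ Finset.range 6,
      (if (2*r + b) % 6 = 0 then 1 else if (2*r + b) % 6 = 3 then (1:ℕ) else 0) = 2 := by decide
  exact key (a % 3) (by omega)

lemma fconstr_weight (m n : ℕ) (hn6 : n % 6 = 0) (hm3 : m % 3 = 0) :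
    ∑ v : Fin m × Fin n, (fconstr m n v).card = (m / 3) * n := by
  have hcard : ∀ p : Fin m × Fin n, (fconstr m n p).card =
      (if (2 * p.1.val + p.2.val) % 6 = 0 then 1
       else if (2 * p.1.val + p.2.val) % 6 = 3 then 1 else 0) := by
    intro p; simp only [fconstr]; split_ifs <;> simp
  rw [Fintype.sum_prod_type]
  calc ∑ i : Fin m, ∑ j : Fin n, (fconstr m n (i, j)).card
      = ∑ i : Fin m, (n/6) * 2 := by
        refine Finset.sum_congr rfl (fun i _ => ?_)
        have step1 : ∀ j : Fin n, (fconstr m n (i, j)).card =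
            (fun b => if (2 * i.val + b) % 6 = 0 then 1
             else if (2 * i.val + b) % 6 = 3 then 1 else 0) j.val := fun j => hcard (i, j)
        rw [Finset.sum_congr rfl (fun j _ => step1 j),
          Fin.sum_univ_eq_sum_range (fun b => if (2 * i.val + b) % 6 = 0 then 1
            else if (2 * i.val + b) % 6 = 3 then 1 else 0) n]
        have hmod : ∀ b, (if (2 * i.val + b) % 6 = 0 then 1
            else if (2 * i.val + b) % 6 = 3 then 1 else 0) =
            (fun r => if (2 * i.val + r) % 6 = 0 then 1
             else if (2 * i.val + r) % 6 = 3 then (1:ℕ) else 0) (b % 6) := by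
          intro b
          simp only
          have h1 : (2 * i.val + b % 6) % 6 = (2 * i.val + b) % 6 := by omega
          rw [h1]
        have hkey := sum_range_mod6 (fun r => if (2 * i.val + r) % 6 = 0 then 1
             else if (2 * i.val + r) % 6 = 3 then (1:ℕ) else 0) (n/6)
        rw [show 6 * (n/6) = n by omega] at hkey
        rw [Finset.sum_congr rfl (fun b _ => hmod b), hkey, row_sum]
    _ = (m / 3) * n := by
        rw [Finset.sum_const, Finset.card_univ, Fintype.card_fin, smul_eq_mul]
        obtain ⟨m', rfl⟩ := Nat.dvd_of_mod_eq_zero hm3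
        obtain ⟨n', rfl⟩ := Nat.dvd_of_mod_eq_zero hn6
        rw [Nat.mul_div_cancel_left m' (by norm_num), Nat.mul_div_cancel_left n' (by norm_num)]
        ring

lemma lower_bound_gen {V : Type*} [Fintype V] [DecidableEq V] (G : SimpleGraph V)
    [DecidableRel G.Adj]
    (hdeg : ∀ x : V, (univ.filter (fun v => G.Adj v x)).card ≤ 4)
    (f : V → Finset (Fin 2))
    (hf : IsRainbowDominating G 2 f) :
    Fintype.card V ≤ 3 * ∑ v, (f v).card := by
  set w := ∑ v, (f v).card with hw
  set S := univ.filter (fun v : V => f v = ∅) with hS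
  have hA : (univ.filter (fun v : V => ¬ f v = ∅)).card ≤ w := by
    rw [Finset.card_eq_sum_ones]
    refine le_trans (Finset.sum_le_sum (fun v hv => ?_))
      (Finset.sum_le_sum_of_subset (Finset.filter_subset _ _))
    simp only [Finset.mem_filter] at hv
    exact Finset.card_pos.mpr (Finset.nonempty_iff_ne_empty.mpr hv.2)
  have hsplit : S.card + (univ.filter (fun v : V => ¬ f v = ∅)).card = Fintype.card V := by
    rw [hS, Finset.card_filter_add_card_filter_not, Finset.card_univ]
  have hC : 2 * S.card ≤ 4 * w := by
    have h1 : ∀ v ∈ S, 2 ≤ (univ.filter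
        (fun p : V × Fin 2 => G.Adj v p.1 ∧ p.2 ∈ f p.1)).card := by
      intro v hv
      simp only [hS, Finset.mem_filter] at hv
      obtain ⟨u0, hu0, hmem0⟩ := hf v hv.2 0
      obtain ⟨u1, hu1, hmem1⟩ := hf v hv.2 1
      have hne : ((u0, (0 : Fin 2)) : V × Fin 2) ≠ (u1, 1) := by
        intro h
        have h2 := congrArg Prod.snd h
        simp only [Prod.snd] at h2
        exact absurd h2 (by decide)
      have hsub : ({(u0, (0:Fin 2)), (u1, 1)} : Finset (V × Fin 2))
          ⊆ univ.filter (fun p : V × Fin 2 => G.Adj v p.1 ∧ p.2 ∈ f p.1) := by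
        intro p hp
        simp only [Finset.mem_insert, Finset.mem_singleton] at hp
        rcases hp with rfl | rfl <;> simp [hu0, hmem0, hu1, hmem1]
      calc 2 = ({(u0, (0:Fin 2)), (u1, 1)} : Finset (V × Fin 2)).card :=
            (Finset.card_pair hne).symm
        _ ≤ _ := Finset.card_le_card hsub
    calc 2 * S.card = ∑ _v ∈ S, 2 := by rw [Finset.sum_const, smul_eq_mul, mul_comm]
      _ ≤ ∑ v ∈ S, (univ.filter
          (fun p : V × Fin 2 => G.Adj v p.1 ∧ p.2 ∈ f p.1)).card := Finset.sum_le_sum h1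
      _ ≤ ∑ v, (univ.filter
          (fun p : V × Fin 2 => G.Adj v p.1 ∧ p.2 ∈ f p.1)).card :=
        Finset.sum_le_sum_of_subset (Finset.subset_univ _)
      _ = ∑ v, ∑ p : V × Fin 2, (if G.Adj v p.1 ∧ p.2 ∈ f p.1 then 1 else 0) := by
        refine Finset.sum_congr rfl (fun v _ => ?_)
        rw [Finset.card_filter]
      _ = ∑ p : V × Fin 2, ∑ v, (if G.Adj v p.1 ∧ p.2 ∈ f p.1 then 1 else 0) :=
        Finset.sum_comm
      _ ≤ ∑ p : V × Fin 2, (if p.2 ∈ f p.1 then 4 else 0) := by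
        refine Finset.sum_le_sum (fun p _ => ?_)
        by_cases hp : p.2 ∈ f p.1
        · simp only [hp, and_true, if_true]
          calc (∑ v, if G.Adj v p.1 then 1 else 0)
              = (univ.filter (fun v => G.Adj v p.1)).card := (Finset.card_filter _ _).symm
            _ ≤ 4 := hdeg p.1
        · simp [hp]
      _ = 4 * w := by
        rw [Fintype.sum_prod_type]
        have h2 : ∀ u : V, (∑ c : Fin 2, if c ∈ f u then (4:ℕ) else 0) = 4 * (f u).card := by
          intro u
          rw [Finset.sum_ite_mem, Finset.univ_inter, Finset.sum_const, smul_eq_mul, mul_comm]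
        rw [Finset.sum_congr rfl (fun u _ => h2 u), ← Finset.mul_sum]
  omega

lemma lower_bound (m n : ℕ) (hm : 3 ≤ m) (hn : 6 ≤ n)
    (f : Fin m × Fin n → Finset (Fin 2))
    (hf : IsRainbowDominating (cycleGraph m □ cycleGraph n) 2 f) :
    m * n ≤ 3 * ∑ v, (f v).card := by
  obtain ⟨m', rfl⟩ : ∃ m', m = m' + 3 := ⟨m - 3, by omega⟩
  obtain ⟨n', rfl⟩ : ∃ n', n = n' + 3 := ⟨n - 3, by omega⟩
  haveI hdec : DecidableRel ((cycleGraph (m'+3) □ cycleGraph (n'+3)).Adj) := fun x y =>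
    inferInstanceAs (Decidable ((cycleGraph (m'+3)).Adj x.1 y.1 ∧ x.2 = y.2 ∨
      (cycleGraph (n'+3)).Adj x.2 y.2 ∧ x.1 = y.1))
  have hdeg : ∀ x : Fin (m'+3) × Fin (n'+3),
      (univ.filter (fun v => (cycleGraph (m'+3) □ cycleGraph (n'+3)).Adj v x)).card ≤ 4 := by
    intro x
    have hsub : (univ.filter (fun v => (cycleGraph (m'+3) □ cycleGraph (n'+3)).Adj v x))
        ⊆ {(x.1 - 1, x.2), (x.1 + 1, x.2), (x.1, x.2 - 1), (x.1, x.2 + 1)} := by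
      intro v hv
      simp only [Finset.mem_filter, Finset.mem_univ, true_and, boxProd_adj] at hv
      simp only [Finset.mem_insert, Finset.mem_singleton]
      rcases hv with ⟨h, h2⟩ | ⟨h, h2⟩
      · rw [cycleGraph_adj] at h
        rcases h with h | h
        · right; left
          rw [sub_eq_iff_eq_add'] at h
          exact Prod.ext h h2
        · left
          rw [sub_eq_iff_eq_add'] at h
          refine Prod.ext ?_ h2
          rw [eq_sub_iff_add_eq]
          exact h.symm
      · rw [cycleGraph_adj] at h
        rcases h with h | h
        · right; right; right
          rw [sub_eq_iff_eq_add'] at h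
          exact Prod.ext h2 h
        · right; right; left
          rw [sub_eq_iff_eq_add'] at h
          refine Prod.ext h2 ?_
          rw [eq_sub_iff_add_eq]
          exact h.symm
    refine le_trans (Finset.card_le_card hsub) ?_
    refine le_trans (Finset.card_insert_le _ _) ?_
    refine Nat.succ_le_succ ?_
    refine le_trans (Finset.card_insert_le _ _) ?_
    refine Nat.succ_le_succ ?_
    refine le_trans (Finset.card_insert_le _ _) ?_
    refine Nat.succ_le_succ ?_
    exact Finset.card_singleton _ |>.le
  have := lower_bound_gen (cycleGraph (m'+3) □ cycleGraph (n'+3)) hdeg f hf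
  rwa [Fintype.card_prod, Fintype.card_fin, Fintype.card_fin] at this

theorem two_rainbow_dom_cycles_mod0 (m n : ℕ) (hm : 3 ≤ m) (hn : 6 ≤ n)
    (hn6 : n % 6 = 0) (hm3 : m % 3 = 0) :
    rainbowDomNum (cycleGraph m □ cycleGraph n) 2 = (m / 3) * n := by
  have hdom := fconstr_dom m n hm hn hn6 hm3
  have hweight := fconstr_weight m n hn6 hm3
  have hmem : (m / 3) * n ∈ {w | ∃ f : Fin m × Fin n → Finset (Fin 2),
      IsRainbowDominating (cycleGraph m □ cycleGraph n) 2 f ∧ w = ∑ v, (f v).card} :=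
    ⟨fconstr m n, hdom, hweight.symm⟩
  rw [rainbowDomNum]
  apply le_antisymm
  · exact Nat.sInf_le hmem
  · obtain ⟨g, hg, hgw⟩ := Nat.sInf_mem (Set.nonempty_of_mem hmem)
    have hlow := lower_bound m n hm hn g hg
    have hmn : m * n = 3 * ((m / 3) * n) := by
      obtain ⟨m', rfl⟩ := Nat.dvd_of_mod_eq_zero hm3
      rw [Nat.mul_div_cancel_left m' (by norm_num)]
      ring
    rw [hgw]
    clear hmem hdom hg hgw hweight
    omega
end

section
/- Let m ≥ 3 and n ≥ 6 with n ≡ 0 (mod 6) and m ≡ 1 (mod 3). Then ((m-1)/3 + 1/2)·n ≤ γ_{r2}(C_m □ C_n) ≤ ((m+2)/3)·n. -/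
open SimpleGraph Finset

/-! ### Auxiliary lemmas -/

/-- Integer-programming lemma on a cycle: if `c : Fin n → ℤ` satisfies
`4 c j + c (j-1) + c (j+1) ≥ -2` for all `j`, then `∑ c ≥ 0`. -/
lemma cycle_int_lemma {n : ℕ} [NeZero n] (c : Fin n → ℤ)
    (h : ∀ j, -2 ≤ 4 * c j + c (j - 1) + c (j + 1)) : 0 ≤ ∑ j, c j := by
  classical
  set N : Finset (Fin n) := univ.filter (fun j => c j < 0) with hN
  set P : Finset (Fin n) := univ.filter (fun j => ¬ c j < 0) with hP
  have shift : ∀ (d : Fin n), ∑ j ∈ N, c (j + d) ≤ ∑ j ∈ P, c j := by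
    intro d
    have himg : ∑ j ∈ N, c (j + d) = ∑ i ∈ N.image (· + d), c i := by
      rw [Finset.sum_image (by intro x _ y _ hxy; exact add_right_cancel hxy)]
    rw [himg]
    have hsplit : N.image (· + d) = ((N.image (· + d)) ∩ P) ∪ ((N.image (· + d)) ∩ N) := by
      ext x
      simp only [Finset.mem_union, Finset.mem_inter, hP, hN, Finset.mem_filter,
        Finset.mem_univ, true_and]
      tauto
    rw [hsplit, Finset.sum_union]
    · have h1 : ∑ i ∈ (N.image (· + d)) ∩ P, c i ≤ ∑ j ∈ P, c j := by
        apply Finset.sum_le_sum_of_subset_of_nonneg (Finset.inter_subset_right)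
        intro i hi _
        simp only [hP, Finset.mem_filter] at hi
        linarith [hi.2]
      have h2 : ∑ i ∈ (N.image (· + d)) ∩ N, c i ≤ 0 := by
        apply Finset.sum_nonpos
        intro i hi
        simp only [hN, Finset.mem_filter, Finset.mem_inter] at hi
        linarith [hi.2.2]
      linarith
    · apply Finset.disjoint_left.mpr
      intro x hx hx2
      simp only [hP, hN, Finset.mem_filter, Finset.mem_inter] at hx hx2
      exact hx.2.2 hx2.2.2
  have hsum : ∑ j, c j = ∑ j ∈ P, c j + ∑ j ∈ N, c j := by
    rw [hP, hN, add_comm]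
    exact (Finset.sum_filter_add_sum_filter_not univ (fun j => c j < 0) c).symm
  have hNcard : ∑ j ∈ N, c j ≤ -(N.card : ℤ) := by
    calc ∑ j ∈ N, c j ≤ ∑ _j ∈ N, (-1 : ℤ) := by
          apply Finset.sum_le_sum
          intro i hi
          simp only [hN, Finset.mem_filter] at hi
          omega
      _ = -(N.card : ℤ) := by simp
  have hmain : -2 * (N.card : ℤ) ≤ 4 * ∑ j ∈ N, c j + 2 * ∑ j ∈ P, c j := by
    have h1 : ∑ j ∈ N, (-2 : ℤ) ≤ ∑ j ∈ N, (4 * c j + c (j - 1) + c (j + 1)) :=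
      Finset.sum_le_sum (fun i _ => h i)
    have h2 : ∑ j ∈ N, (4 * c j + c (j - 1) + c (j + 1))
        = 4 * ∑ j ∈ N, c j + ∑ j ∈ N, c (j - 1) + ∑ j ∈ N, c (j + 1) := by
      rw [Finset.sum_add_distrib, Finset.sum_add_distrib, Finset.mul_sum]
    have h3 := shift (-1)
    have h4 := shift 1
    simp only [← sub_eq_add_neg] at h3
    have h5 : ∑ j ∈ N, (-2 : ℤ) = -2 * N.card := by simp [mul_comm]
    rw [h5, h2] at h1
    linarith
  rw [hsum]
  linarith

/-- The column inequality: for any 2-rainbow dominating function of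
`C_m □ C_n`, twice `m` is at most `4 a_j + a_{j-1} + a_{j+1}` where `a_j` is
the weight of column `j`. -/
lemma col_ineq {m n : ℕ} [NeZero m] [NeZero n] (hm : 3 ≤ m) (hn : 3 ≤ n)
    (f : Fin m × Fin n → Finset (Fin 2))
    (hf : IsRainbowDominating (cycleGraph m □ cycleGraph n) 2 f)
    (j : Fin n) :
    2 * m ≤ 4 * (∑ i, (f (i, j)).card) + (∑ i, (f (i, j - 1)).card)
      + (∑ i, (f (i, j + 1)).card) := by
  have h1m : (1 : Fin m).val = 1 := by rw [Fin.val_one']; exact Nat.mod_eq_of_lt (by omega)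
  have h1n : (1 : Fin n).val = 1 := by rw [Fin.val_one']; exact Nat.mod_eq_of_lt (by omega)
  have key : ∀ i : Fin m, f (i, j) = ∅ → ∀ c : Fin 2,
      c ∈ f (i - 1, j) ∨ c ∈ f (i + 1, j) ∨ c ∈ f (i, j - 1) ∨ c ∈ f (i, j + 1) := by
    intro i hi c
    obtain ⟨u, hadj, hc⟩ := hf (i, j) hi c
    rw [SimpleGraph.boxProd_adj] at hadj
    rcases hadj with ⟨hadj, h2⟩ | ⟨hadj, h2⟩
    · rw [SimpleGraph.cycleGraph_adj'] at hadj
      simp only at h2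
      rcases hadj with h1 | h1
      · left
        have hs : i - u.1 = 1 := Fin.ext (by rw [h1m]; exact h1)
        have hu1 : u.1 = i - 1 := by rw [← hs, sub_sub_cancel]
        have hu : u = (i - 1, j) := Prod.ext hu1 h2.symm
        rwa [hu] at hc
      · right; left
        have hs : u.1 - i = 1 := Fin.ext (by rw [h1m]; exact h1)
        have hu1 : u.1 = i + 1 := by rw [sub_eq_iff_eq_add.mp hs, add_comm]
        have hu : u = (i + 1, j) := Prod.ext hu1 h2.symm
        rwa [hu] at hc
    · rw [SimpleGraph.cycleGraph_adj'] at hadj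
      simp only at h2
      rcases hadj with h1 | h1
      · right; right; left
        have hs : j - u.2 = 1 := Fin.ext (by rw [h1n]; exact h1)
        have hu2 : u.2 = j - 1 := by rw [← hs, sub_sub_cancel]
        have hu : u = (i, j - 1) := Prod.ext h2.symm hu2
        rwa [hu] at hc
      · right; right; right
        have hs : u.2 - j = 1 := Fin.ext (by rw [h1n]; exact h1)
        have hu2 : u.2 = j + 1 := by rw [sub_eq_iff_eq_add.mp hs, add_comm]
        have hu : u = (i, j + 1) := Prod.ext h2.symm hu2
        rwa [hu] at hc
  have pointwise : ∀ i : Fin m,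
      2 ≤ ((f (i - 1, j)).card + (f (i + 1, j)).card + (f (i, j - 1)).card
        + (f (i, j + 1)).card) + 2 * (f (i, j)).card := by
    intro i
    by_cases hi : f (i, j) = ∅
    · have hsub : (univ : Finset (Fin 2)) ⊆
          f (i - 1, j) ∪ f (i + 1, j) ∪ f (i, j - 1) ∪ f (i, j + 1) := by
        intro c _
        simp only [Finset.mem_union]
        rcases key i hi c with h | h | h | h <;> tauto
      have h2 : 2 ≤ (f (i - 1, j) ∪ f (i + 1, j) ∪ f (i, j - 1) ∪ f (i, j + 1)).card := by
        calc 2 = (univ : Finset (Fin 2)).card := by simp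
          _ ≤ _ := Finset.card_le_card hsub
      have h3 := Finset.card_union_le (f (i - 1, j) ∪ f (i + 1, j) ∪ f (i, j - 1)) (f (i, j + 1))
      have h4 := Finset.card_union_le (f (i - 1, j) ∪ f (i + 1, j)) (f (i, j - 1))
      have h5 := Finset.card_union_le (f (i - 1, j)) (f (i + 1, j))
      omega
    · have : 1 ≤ (f (i, j)).card := Finset.card_pos.mpr (Finset.nonempty_iff_ne_empty.mpr hi)
      omega
  have hsum : 2 * m = ∑ _i : Fin m, 2 := by
    simp [Finset.sum_const, Finset.card_univ, mul_comm]
  have r1 : ∑ i : Fin m, (f (i - 1, j)).card = ∑ i, (f (i, j)).card :=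
    Fintype.sum_equiv (Equiv.subRight (1 : Fin m)) _ _ (fun i => rfl)
  have r2 : ∑ i : Fin m, (f (i + 1, j)).card = ∑ i, (f (i, j)).card :=
    Fintype.sum_equiv (Equiv.addRight (1 : Fin m)) _ _ (fun i => rfl)
  calc 2 * m = ∑ _i : Fin m, 2 := hsum
    _ ≤ ∑ i : Fin m, (((f (i - 1, j)).card + (f (i + 1, j)).card + (f (i, j - 1)).card
        + (f (i, j + 1)).card) + 2 * (f (i, j)).card) :=
      Finset.sum_le_sum (fun i _ => pointwise i)
    _ = 4 * (∑ i, (f (i, j)).card) + (∑ i, (f (i, j - 1)).card)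
        + (∑ i, (f (i, j + 1)).card) := by
      simp only [Finset.sum_add_distrib, ← Finset.mul_sum, r1, r2]
      ring

/-- Lower bound on the weight of any 2-rainbow dominating function of
`C_{3k+1} □ C_{6t}`. -/
lemma lb_weight (k t : ℕ) (hk : 1 ≤ k) (ht : 1 ≤ t)
    (f : Fin (3*k+1) × Fin (6*t) → Finset (Fin 2))
    (hf : IsRainbowDominating (cycleGraph (3*k+1) □ cycleGraph (6*t)) 2 f) :
    6*t*(2*k+1) ≤ 2 * ∑ v, (f v).card := by
  haveI : NeZero (6*t) := ⟨by omega⟩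
  set a : Fin (6*t) → ℤ := fun j => ((∑ i, (f (i, j)).card : ℕ) : ℤ) with ha
  have hcol : ∀ j : Fin (6*t), (2*(3*k+1) : ℤ) ≤ 4 * a j + a (j - 1) + a (j + 1) := by
    intro j
    have h := col_ineq (by omega) (by omega) f hf j
    have : ((2 * (3*k+1) : ℕ) : ℤ) ≤
        ((4 * (∑ i, (f (i, j)).card) + (∑ i, (f (i, j - 1)).card)
          + (∑ i, (f (i, j + 1)).card) : ℕ) : ℤ) := by exact_mod_cast h
    push_cast at this
    simpa [ha] using this
  have hlem := cycle_int_lemma (fun j => 2 * a j - (2*(k:ℤ)+1)) (fun j => by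
    have := hcol j
    push_cast
    ring_nf
    ring_nf at this
    linarith)
  have hsum : ∑ j : Fin (6*t), (2 * a j - (2*(k:ℤ)+1))
      = 2 * ∑ j, a j - (6*t) * (2*k+1) := by
    rw [Finset.sum_sub_distrib, ← Finset.mul_sum, Finset.sum_const, Finset.card_univ]
    simp only [Fintype.card_fin, nsmul_eq_mul]
    push_cast
    ring
  rw [hsum] at hlem
  have hW : ∑ j : Fin (6*t), a j = ((∑ v : Fin (3*k+1) × Fin (6*t), (f v).card : ℕ) : ℤ) := by
    rw [ha]
    push_cast
    rw [Fintype.sum_prod_type]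
    exact Finset.sum_comm
  rw [hW] at hlem
  have : ((6*t*(2*k+1) : ℕ) : ℤ) ≤ ((2 * ∑ v, (f v).card : ℕ) : ℤ) := by
    push_cast at hlem ⊢
    linarith
  exact_mod_cast this

/-! ### The upper-bound construction -/

/-- The explicit 2-rainbow dominating pattern: diagonal singleton stripes on the
first `m - 1` rows, and a heavier periodic pattern on the last row. -/
def ubF (m i j : ℕ) : Finset (Fin 2) :=
  if i = m - 1 then
    if j % 6 = 0 ∨ j % 6 = 3 then {0, 1}
    else if j % 6 = 2 then {0}
    else if j % 6 = 5 then {1}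
    else ∅
  else if (2 * i + j) % 6 = 0 then {0}
  else if (2 * i + j) % 6 = 3 then {1}
  else ∅

lemma fin_addone {n : ℕ} [NeZero n] (hn : 2 ≤ n) (x : Fin n) :
    (x.val = n - 1 ∧ (x + 1).val = 0) ∨ (x.val < n - 1 ∧ (x + 1).val = x.val + 1) := by
  have h1 : (1 : Fin n).val = 1 := by rw [Fin.val_one']; exact Nat.mod_eq_of_lt (by omega)
  have hd : (x + 1).val = (x.val + 1) % n := by rw [Fin.add_def, h1]
  have hx := x.isLt
  by_cases hc : x.val = n - 1
  · left
    refine ⟨hc, ?_⟩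
    rw [hd, hc, show n - 1 + 1 = n by omega, Nat.mod_self]
  · right
    refine ⟨by omega, ?_⟩
    rw [hd]
    exact Nat.mod_eq_of_lt (by omega)

lemma fin_subone {n : ℕ} [NeZero n] (hn : 2 ≤ n) (x : Fin n) :
    (x.val = 0 ∧ (x - 1).val = n - 1) ∨ (1 ≤ x.val ∧ (x - 1).val = x.val - 1) := by
  have h1 : (1 : Fin n).val = 1 := by rw [Fin.val_one']; exact Nat.mod_eq_of_lt (by omega)
  have hd : (x - 1).val = (n - (1 : Fin n).val + x.val) % n := by rw [Fin.sub_def]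
  rw [h1] at hd
  have hx := x.isLt
  by_cases hc : x.val = 0
  · left
    refine ⟨hc, ?_⟩
    rw [hd, hc, Nat.add_zero]
    exact Nat.mod_eq_of_lt (by omega)
  · right
    refine ⟨by omega, ?_⟩
    rw [hd, show n - 1 + x.val = x.val - 1 + n by omega, Nat.add_mod_right]
    exact Nat.mod_eq_of_lt (by omega)

/-- The pattern `ubF` is 2-rainbow dominating on `C_{3k+1} □ C_{6t}`. -/
lemma ub_dom (k t : ℕ) (hk : 1 ≤ k) (ht : 1 ≤ t) :
    IsRainbowDominating (cycleGraph (3*k+1) □ cycleGraph (6*t)) 2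
      (fun v => ubF (3*k+1) v.1.val v.2.val) := by
  haveI : NeZero (6*t) := ⟨by omega⟩
  have h1m : (1 : Fin (3*k+1)).val = 1 := by
    rw [Fin.val_one']; exact Nat.mod_eq_of_lt (by omega)
  have h1n : (1 : Fin (6*t)).val = 1 := by
    rw [Fin.val_one']; exact Nat.mod_eq_of_lt (by omega)
  rintro ⟨i, j⟩ hv c
  simp only at hv
  have hI := i.isLt
  have hJ := j.isLt
  have adjL : (cycleGraph (3*k+1) □ cycleGraph (6*t)).Adj (i, j) (i, j - 1) := by
    rw [SimpleGraph.boxProd_adj]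
    exact Or.inr ⟨SimpleGraph.cycleGraph_adj'.mpr (Or.inl (by rw [sub_sub_cancel, h1n])), rfl⟩
  have adjR : (cycleGraph (3*k+1) □ cycleGraph (6*t)).Adj (i, j) (i, j + 1) := by
    rw [SimpleGraph.boxProd_adj]
    exact Or.inr ⟨SimpleGraph.cycleGraph_adj'.mpr (Or.inr (by rw [add_sub_cancel_left, h1n])), rfl⟩
  have adjU : (cycleGraph (3*k+1) □ cycleGraph (6*t)).Adj (i, j) (i + 1, j) := by
    rw [SimpleGraph.boxProd_adj]
    exact Or.inl ⟨SimpleGraph.cycleGraph_adj'.mpr (Or.inr (by rw [add_sub_cancel_left, h1m])), rfl⟩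
  have adjD : (cycleGraph (3*k+1) □ cycleGraph (6*t)).Adj (i, j) (i - 1, j) := by
    rw [SimpleGraph.boxProd_adj]
    exact Or.inl ⟨SimpleGraph.cycleGraph_adj'.mpr (Or.inl (by rw [sub_sub_cancel, h1m])), rfl⟩
  by_cases hlast : i.val = 3*k
  · have hcond : j.val % 6 = 1 ∨ j.val % 6 = 4 := by
      by_contra hcon
      push_neg at hcon
      rw [ubF, if_pos (by omega : i.val = (3*k+1) - 1)] at hv
      have h6 : j.val % 6 = 0 ∨ j.val % 6 = 2 ∨ j.val % 6 = 3 ∨ j.val % 6 = 5 := by omega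
      rcases h6 with h | h | h | h
      · rw [if_pos (Or.inl h)] at hv; exact absurd hv (by decide)
      · rw [if_neg (by omega), if_pos h] at hv; exact absurd hv (by decide)
      · rw [if_pos (Or.inr h)] at hv; exact absurd hv (by decide)
      · rw [if_neg (by omega), if_neg (by omega), if_pos h] at hv; exact absurd hv (by decide)
    refine ⟨(i, j - 1), adjL, ?_⟩
    rcases fin_subone (by omega) j with ⟨hj0, hval⟩ | ⟨hj1, hval⟩
    · omega
    · show c ∈ ubF (3*k+1) i.val (j - 1).val
      rw [hval, ubF, if_pos (by omega : i.val = (3*k+1) - 1),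
        if_pos (by omega : (j.val - 1) % 6 = 0 ∨ (j.val - 1) % 6 = 3)]
      fin_cases c <;> decide
  · have hIne : i.val ≠ (3*k+1) - 1 := by omega
    have hs : (2 * i.val + j.val) % 6 = 1 ∨ (2 * i.val + j.val) % 6 = 2 ∨
        (2 * i.val + j.val) % 6 = 4 ∨ (2 * i.val + j.val) % 6 = 5 := by
      by_contra hcon
      push_neg at hcon
      rw [ubF, if_neg hIne] at hv
      have h6 : (2 * i.val + j.val) % 6 = 0 ∨ (2 * i.val + j.val) % 6 = 3 := by omega
      rcases h6 with h | h
      · rw [if_pos h] at hv; exact absurd hv (by decide)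
      · rw [if_neg (by omega), if_pos h] at hv; exact absurd hv (by decide)
    have hup : (i + 1).val = i.val + 1 := by
      rcases fin_addone (by omega) i with ⟨h1, _⟩ | ⟨_, h2⟩
      · omega
      · exact h2
    have hdownspec := fin_subone (n := 3*k+1) (by omega) i
    have hleftspec := fin_subone (n := 6*t) (by omega) j
    have hrightspec := fin_addone (n := 6*t) (by omega) j
    fin_cases c <;> rcases hs with h | h | h | h
    · refine ⟨(i, j - 1), adjL, ?_⟩
      show (0 : Fin 2) ∈ ubF (3*k+1) i.val (j - 1).val
      rcases hleftspec with ⟨hj0, hval⟩ | ⟨hj1, hval⟩ <;>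
        rw [hval, ubF, if_neg hIne, if_pos (by omega)] <;> decide
    · refine ⟨(i - 1, j), adjD, ?_⟩
      show (0 : Fin 2) ∈ ubF (3*k+1) (i - 1).val j.val
      rcases hdownspec with ⟨hi0, hval⟩ | ⟨hi1, hval⟩
      · rw [hval, ubF, if_pos (by omega), if_neg (by omega), if_pos (by omega)]
        decide
      · rw [hval, ubF, if_neg (by omega), if_pos (by omega)]
        decide
    · refine ⟨(i + 1, j), adjU, ?_⟩
      show (0 : Fin 2) ∈ ubF (3*k+1) (i + 1).val j.val
      rw [hup]
      by_cases htop : i.val + 1 = 3*k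
      · rw [ubF, if_pos (by omega), if_pos (by omega : j.val % 6 = 0 ∨ j.val % 6 = 3)]
        decide
      · rw [ubF, if_neg (by omega), if_pos (by omega)]
        decide
    · refine ⟨(i, j + 1), adjR, ?_⟩
      show (0 : Fin 2) ∈ ubF (3*k+1) i.val (j + 1).val
      rcases hrightspec with ⟨hj0, hval⟩ | ⟨hj1, hval⟩ <;>
        rw [hval, ubF, if_neg hIne, if_pos (by omega)] <;> decide
    · refine ⟨(i + 1, j), adjU, ?_⟩
      show (1 : Fin 2) ∈ ubF (3*k+1) (i + 1).val j.val
      rw [hup]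
      by_cases htop : i.val + 1 = 3*k
      · rw [ubF, if_pos (by omega), if_pos (by omega : j.val % 6 = 0 ∨ j.val % 6 = 3)]
        decide
      · rw [ubF, if_neg (by omega), if_neg (by omega), if_pos (by omega)]
        decide
    · refine ⟨(i, j + 1), adjR, ?_⟩
      show (1 : Fin 2) ∈ ubF (3*k+1) i.val (j + 1).val
      rcases hrightspec with ⟨hj0, hval⟩ | ⟨hj1, hval⟩ <;>
        rw [hval, ubF, if_neg hIne, if_neg (by omega), if_pos (by omega)] <;> decide
    · refine ⟨(i, j - 1), adjL, ?_⟩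
      show (1 : Fin 2) ∈ ubF (3*k+1) i.val (j - 1).val
      rcases hleftspec with ⟨hj0, hval⟩ | ⟨hj1, hval⟩ <;>
        rw [hval, ubF, if_neg hIne, if_neg (by omega), if_pos (by omega)] <;> decide
    · refine ⟨(i - 1, j), adjD, ?_⟩
      show (1 : Fin 2) ∈ ubF (3*k+1) (i - 1).val j.val
      rcases hdownspec with ⟨hi0, hval⟩ | ⟨hi1, hval⟩
      · rw [hval, ubF, if_pos (by omega), if_neg (by omega), if_neg (by omega), if_pos (by omega)]
        decide
      · rw [hval, ubF, if_neg (by omega), if_neg (by omega), if_pos (by omega)]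
        decide

/-! ### Weight of the construction -/

lemma sum_mod6 (g : ℕ → ℕ) (t : ℕ) :
    ∑ j ∈ range (6 * t), g (j % 6) = t * (g 0 + g 1 + g 2 + g 3 + g 4 + g 5) := by
  induction t with
  | zero => simp
  | succ t ih =>
    have h6 : 6 * (t + 1) = ((((((6 * t) + 1) + 1) + 1) + 1) + 1) + 1 := by ring
    rw [h6, Finset.sum_range_succ, Finset.sum_range_succ, Finset.sum_range_succ,
      Finset.sum_range_succ, Finset.sum_range_succ, Finset.sum_range_succ, ih]
    have e0 : 6 * t % 6 = 0 := by omega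
    have e1 : (6 * t + 1) % 6 = 1 := by omega
    have e2 : (6 * t + 1 + 1) % 6 = 2 := by omega
    have e3 : (6 * t + 1 + 1 + 1) % 6 = 3 := by omega
    have e4 : (6 * t + 1 + 1 + 1 + 1) % 6 = 4 := by omega
    have e5 : (6 * t + 1 + 1 + 1 + 1 + 1) % 6 = 5 := by omega
    rw [e0, e1, e2, e3, e4, e5]
    ring

lemma ubF_mod (m i j : ℕ) (hi : i ≠ m - 1) : ubF m i j = ubF m i (j % 6) := by
  have e : (2 * i + j % 6) % 6 = (2 * i + j) % 6 := by omega
  simp only [ubF, if_neg hi, e]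

lemma ubF_last_mod (m j : ℕ) : ubF m (m - 1) j = ubF m (m - 1) (j % 6) := by
  have e : j % 6 % 6 = j % 6 := by omega
  simp only [ubF, if_pos rfl, e, if_true]

lemma row_sum_last (m t : ℕ) :
    ∑ j ∈ range (6 * t), (ubF m (m - 1) j).card = 6 * t := by
  have hc : ∀ j ∈ range (6 * t), (ubF m (m - 1) j).card = (ubF m (m - 1) (j % 6)).card := by
    intro j _; rw [← ubF_last_mod]
  rw [Finset.sum_congr rfl hc, sum_mod6 (fun r => (ubF m (m - 1) r).card) t]
  have : (ubF m (m-1) 0).card + (ubF m (m-1) 1).card + (ubF m (m-1) 2).card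
      + (ubF m (m-1) 3).card + (ubF m (m-1) 4).card + (ubF m (m-1) 5).card = 6 := by
    simp only [ubF, if_pos rfl, if_true]
    norm_num
  rw [this]
  ring

lemma row_sum_pattern (m t i : ℕ) (hi : i ≠ m - 1) :
    ∑ j ∈ range (6 * t), (ubF m i j).card = 2 * t := by
  have hc : ∀ j ∈ range (6 * t), (ubF m i j).card = (ubF m i (j % 6)).card := by
    intro j _; rw [← ubF_mod m i j hi]
  rw [Finset.sum_congr rfl hc, sum_mod6 (fun r => (ubF m i r).card) t]
  have hd : 2 * i % 6 = 0 ∨ 2 * i % 6 = 2 ∨ 2 * i % 6 = 4 := by omega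
  have key : (ubF m i 0).card + (ubF m i 1).card + (ubF m i 2).card
      + (ubF m i 3).card + (ubF m i 4).card + (ubF m i 5).card = 2 := by
    simp only [ubF, if_neg hi]
    rcases hd with h | h | h
    · rw [if_pos (by omega : (2*i+0) % 6 = 0), if_neg (by omega : ¬ (2*i+1) % 6 = 0),
        if_neg (by omega : ¬ (2*i+1) % 6 = 3), if_neg (by omega : ¬ (2*i+2) % 6 = 0),
        if_neg (by omega : ¬ (2*i+2) % 6 = 3), if_neg (by omega : ¬ (2*i+3) % 6 = 0),
        if_pos (by omega : (2*i+3) % 6 = 3), if_neg (by omega : ¬ (2*i+4) % 6 = 0),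
        if_neg (by omega : ¬ (2*i+4) % 6 = 3), if_neg (by omega : ¬ (2*i+5) % 6 = 0),
        if_neg (by omega : ¬ (2*i+5) % 6 = 3)]
      norm_num
    · rw [if_neg (by omega : ¬ (2*i+0) % 6 = 0), if_neg (by omega : ¬ (2*i+0) % 6 = 3),
        if_neg (by omega : ¬ (2*i+1) % 6 = 0), if_pos (by omega : (2*i+1) % 6 = 3),
        if_neg (by omega : ¬ (2*i+2) % 6 = 0), if_neg (by omega : ¬ (2*i+2) % 6 = 3),
        if_neg (by omega : ¬ (2*i+3) % 6 = 0), if_neg (by omega : ¬ (2*i+3) % 6 = 3),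
        if_pos (by omega : (2*i+4) % 6 = 0), if_neg (by omega : ¬ (2*i+5) % 6 = 0),
        if_neg (by omega : ¬ (2*i+5) % 6 = 3)]
      norm_num
    · rw [if_neg (by omega : ¬ (2*i+0) % 6 = 0), if_neg (by omega : ¬ (2*i+0) % 6 = 3),
        if_neg (by omega : ¬ (2*i+1) % 6 = 0), if_neg (by omega : ¬ (2*i+1) % 6 = 3),
        if_pos (by omega : (2*i+2) % 6 = 0), if_neg (by omega : ¬ (2*i+3) % 6 = 0),
        if_neg (by omega : ¬ (2*i+3) % 6 = 3), if_neg (by omega : ¬ (2*i+4) % 6 = 0),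
        if_neg (by omega : ¬ (2*i+4) % 6 = 3), if_neg (by omega : ¬ (2*i+5) % 6 = 0),
        if_pos (by omega : (2*i+5) % 6 = 3)]
      norm_num
  rw [key]
  ring

lemma ub_weight (k t : ℕ) :
    ∑ v : Fin (3*k+1) × Fin (6*t), (ubF (3*k+1) v.1.val v.2.val).card = 6*k*t + 6*t := by
  rw [Fintype.sum_prod_type]
  have inner : ∀ i : Fin (3*k+1), ∑ j : Fin (6*t), (ubF (3*k+1) i.val j.val).card
      = ∑ j ∈ range (6*t), (ubF (3*k+1) i.val j).card := fun i =>
    Fin.sum_univ_eq_sum_range (fun j => (ubF (3*k+1) i.val j).card) (6*t)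
  rw [Finset.sum_congr rfl (fun i _ => inner i)]
  have outer : ∑ i : Fin (3*k+1), ∑ j ∈ range (6*t), (ubF (3*k+1) i.val j).card
      = ∑ i ∈ range (3*k+1), ∑ j ∈ range (6*t), (ubF (3*k+1) i j).card :=
    Fin.sum_univ_eq_sum_range (fun I => ∑ j ∈ range (6*t), (ubF (3*k+1) I j).card) (3*k+1)
  rw [outer, Finset.sum_range_succ]
  have hlast : ∑ j ∈ range (6*t), (ubF (3*k+1) (3*k) j).card = 6*t := by
    have h := row_sum_last (3*k+1) t
    simpa using h
  have hpat : ∀ i ∈ range (3*k), ∑ j ∈ range (6*t), (ubF (3*k+1) i j).card = 2*t := by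
    intro i hi
    rw [Finset.mem_range] at hi
    exact row_sum_pattern (3*k+1) t i (by omega)
  rw [Finset.sum_congr rfl hpat, hlast, Finset.sum_const, Finset.card_range]
  simp only [smul_eq_mul]
  ring

/-! ### Main theorem -/

theorem two_rainbow_dom_cycles_mod1 (m n : ℕ) (hm : 3 ≤ m) (hn : 6 ≤ n)
    (hn6 : n % 6 = 0) (hm3 : m % 3 = 1) :
    (((m : ℚ) - 1) / 3 + 1 / 2) * n ≤ rainbowDomNum (cycleGraph m □ cycleGraph n) 2 ∧
    (rainbowDomNum (cycleGraph m □ cycleGraph n) 2 : ℚ) ≤ ((m : ℚ) + 2) / 3 * n := by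
  obtain ⟨k, hkm⟩ : ∃ k, m = 3*k+1 := ⟨m / 3, by omega⟩
  obtain ⟨t, htn⟩ : ∃ t, n = 6*t := ⟨n / 6, by omega⟩
  have hk : 1 ≤ k := by omega
  have ht : 1 ≤ t := by omega
  subst hkm htn
  have hdef : rainbowDomNum (cycleGraph (3*k+1) □ cycleGraph (6*t)) 2
      = sInf {w | ∃ f : (Fin (3*k+1) × Fin (6*t)) → Finset (Fin 2),
          IsRainbowDominating (cycleGraph (3*k+1) □ cycleGraph (6*t)) 2 f
          ∧ w = ∑ v, (f v).card} := rfl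
  have hmemub : (6*k*t + 6*t) ∈ {w | ∃ f : (Fin (3*k+1) × Fin (6*t)) → Finset (Fin 2),
      IsRainbowDominating (cycleGraph (3*k+1) □ cycleGraph (6*t)) 2 f
      ∧ w = ∑ v, (f v).card} :=
    ⟨fun v => ubF (3*k+1) v.1.val v.2.val, ub_dom k t hk ht, (ub_weight k t).symm⟩
  have hne : Set.Nonempty {w | ∃ f : (Fin (3*k+1) × Fin (6*t)) → Finset (Fin 2),
      IsRainbowDominating (cycleGraph (3*k+1) □ cycleGraph (6*t)) 2 f
      ∧ w = ∑ v, (f v).card} := ⟨_, hmemub⟩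
  have hub : rainbowDomNum (cycleGraph (3*k+1) □ cycleGraph (6*t)) 2 ≤ 6*k*t + 6*t := by
    rw [hdef]; exact Nat.sInf_le hmemub
  obtain ⟨f, hf, hWeq⟩ := Nat.sInf_mem hne
  have hlb : 6*t*(2*k+1) ≤ 2 * rainbowDomNum (cycleGraph (3*k+1) □ cycleGraph (6*t)) 2 := by
    rw [hdef, hWeq]
    exact lb_weight k t hk ht f hf
  constructor
  · have hcast : ((6*t*(2*k+1) : ℕ) : ℚ)
        ≤ 2 * (rainbowDomNum (cycleGraph (3*k+1) □ cycleGraph (6*t)) 2 : ℚ) := by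
      exact_mod_cast hlb
    push_cast at hcast ⊢
    nlinarith [hcast]
  · have hcast : (rainbowDomNum (cycleGraph (3*k+1) □ cycleGraph (6*t)) 2 : ℚ)
        ≤ ((6*k*t + 6*t : ℕ) : ℚ) := by exact_mod_cast hub
    push_cast at hcast ⊢
    nlinarith [hcast]
end

section
/- Let m ≥ 3 and n ≥ 6 with n ≡ 0 (mod 6) and m ≡ 2 (mod 3). Then γ_{r2}(C_m □ C_n) = ((m+1)/3)·n. -/
open SimpleGraph Finset

section Aux


lemma sum_range_shift (n : ℕ) (F : ℕ → ℤ) :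
    ∑ i ∈ Finset.range n, F (i+1) = ∑ i ∈ Finset.range n, F i + F n - F 0 := by
  have h1 := Finset.sum_range_succ' F n
  have h2 := Finset.sum_range_succ F n
  omega

lemma sum_Ico_glue (Z : ℤ → ℤ) {a b c : ℤ} (h1 : a ≤ b) (h2 : b ≤ c) :
    ∑ t ∈ Finset.Ico a b, Z t + ∑ t ∈ Finset.Ico b c, Z t = ∑ t ∈ Finset.Ico a c, Z t := by
  rw [← Finset.sum_union (Finset.Ico_disjoint_Ico_consecutive a b c),
    Finset.Ico_union_Ico_eq_Ico h1 h2]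

lemma Ico_int_singleton (a : ℤ) : Finset.Ico a (a+1) = {a} := by
  ext t; simp [Finset.mem_Ico]; omega

lemma sum_Ico_int (Z : ℤ → ℤ) (a : ℤ) (N : ℕ) :
    ∑ t ∈ Finset.Ico a (a + (N:ℤ)), Z t = ∑ i ∈ Finset.range N, Z (a + i) := by
  induction N with
  | zero => simp
  | succ N ih =>
      rw [Finset.sum_range_succ, ← ih]
      push_cast
      rw [← sum_Ico_glue Z (show a ≤ a + (N:ℤ) by omega)
          (show a + (N:ℤ) ≤ a + ((N:ℤ)+1) by omega)]
      rw [show a + ((N:ℤ)+1) = (a + (N:ℤ)) + 1 by ring, Ico_int_singleton,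
        Finset.sum_singleton]

/-- Key arithmetic lemma: a periodic integer sequence with
`z (t-1) + 4 z t + z (t+1) ≥ -2` everywhere has nonnegative sum over a period. -/
lemma cyclic_sum_nonneg (n : ℕ) (hn : 1 ≤ n) (Z : ℤ → ℤ)
    (hper : ∀ t, Z (t + n) = Z t)
    (hc : ∀ t : ℤ, -2 ≤ Z (t-1) + 4 * Z t + Z (t+1)) :
    0 ≤ ∑ i ∈ Finset.range n, Z i := by
  classical
  set G : ℤ → ℤ := fun a => ∑ i ∈ Finset.range n, Z (a + i) with hG
  have hGshift : ∀ a : ℤ, G (a + 1) = G a := by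
    intro a
    have e0 : G (a+1) = ∑ i ∈ Finset.range n, (fun i : ℕ => Z (a + i)) (i+1) := by
      apply Finset.sum_congr rfl; intro i _
      show Z (a + 1 + i) = Z (a + (i+1:ℕ))
      congr 1; push_cast; ring
    rw [e0, sum_range_shift n (fun i : ℕ => Z (a + i))]
    show (∑ i ∈ Finset.range n, Z (a + i)) + Z (a + n) - Z (a + (0:ℕ)) = G a
    rw [hper a]
    simp [hG]
  have hGall : ∀ a : ℤ, G a = G 0 := by
    intro a
    induction a using Int.induction_on with
    | zero => rfl
    | succ k ih => rw [hGshift k]; exact ih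
    | pred k ih =>
        have h := hGshift (-(k:ℤ) - 1)
        rw [show (-(k:ℤ) - 1) + 1 = -(k:ℤ) by ring] at h
        rw [← h]; exact ih
  have hG0 : G 0 = ∑ i ∈ Finset.range n, Z i := by
    apply Finset.sum_congr rfl; intro i _; rw [zero_add]
  by_cases hpos : ∃ p : ℤ, 1 ≤ Z p
  · obtain ⟨p0, hp0⟩ := hpos
    have next_ex : ∀ p : ℤ, 1 ≤ Z p → ∃ q, p < q ∧ q ≤ p + n ∧ 1 ≤ Z q ∧
        ∀ x, p < x → x < q → Z x ≤ 0 := by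
      intro p hp
      have hex : ∃ k : ℕ, 1 ≤ Z (p + 1 + k) := by
        refine ⟨n - 1, ?_⟩
        have he : p + 1 + ((n - 1 : ℕ) : ℤ) = p + n := by omega
        rw [he, hper]; exact hp
      have hk : 1 ≤ Z (p + 1 + (Nat.find hex : ℤ)) := Nat.find_spec hex
      have hkle : Nat.find hex ≤ n - 1 := Nat.find_min' hex (by
        have he : p + 1 + ((n - 1 : ℕ) : ℤ) = p + n := by omega
        rw [he, hper]; exact hp)
      refine ⟨p + 1 + (Nat.find hex : ℤ), by omega, by omega, hk, ?_⟩
      intro x hx1 hx2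
      have hx3 : x = p + 1 + ((x - p - 1).toNat : ℤ) := by omega
      have hlt : (x - p - 1).toNat < Nat.find hex := by omega
      have := Nat.find_min hex hlt
      rw [← hx3] at this
      omega
    have claimA : ∀ p q : ℤ, 1 ≤ Z p → 1 ≤ Z q → p < q →
        (∀ x, p < x → x < q → Z x ≤ 0) →
        Z p - Z q ≤ 2 * ∑ t ∈ Finset.Ico p q, Z t := by
      intro p q hp hq hpq hbet
      rcases (by omega : q = p + 1 ∨ q = p + 2 ∨ q = p + 3 ∨ p + 4 ≤ q) with h|h|h|h
      · subst h
        rw [Ico_int_singleton, Finset.sum_singleton]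
        omega
      · subst h
        have hs : Finset.Ico p (p+2) = {p, p+1} := by
          ext t; simp [Finset.mem_Ico]; omega
        rw [hs, Finset.sum_insert (by simp only [Finset.mem_singleton]; omega),
          Finset.sum_singleton]
        have h1 := hc (p+1)
        have hb := hbet (p+1) (by omega) (by omega)
        rw [show p + 1 - 1 = p by ring, show p+1+1 = p+2 by ring] at h1
        omega
      · subst h
        have hs : Finset.Ico p (p+3) = {p, p+1, p+2} := by
          ext t; simp [Finset.mem_Ico]; omega
        rw [hs, Finset.sum_insert (by simp only [Finset.mem_insert, Finset.mem_singleton]; omega),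
          Finset.sum_insert (by simp only [Finset.mem_singleton]; omega),
          Finset.sum_singleton]
        have h1 := hc (p+1); have h2 := hc (p+2)
        rw [show p + 1 - 1 = p by ring, show p+1+1 = p+2 by ring] at h1
        rw [show p + 2 - 1 = p+1 by ring, show p+2+1 = p+3 by ring] at h2
        have hb1 := hbet (p+1) (by omega) (by omega)
        have hb2 := hbet (p+2) (by omega) (by omega)
        omega
      · have hint : ∀ x, p + 2 ≤ x → x ≤ q - 2 → Z x = 0 := by
          intro x h1 h2
          have hcx := hc x
          have ha := hbet (x-1) (by omega) (by omega)
          have hb := hbet (x+1) (by omega) (by omega)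
          have hx := hbet x (by omega) (by omega)
          omega
        have hsplit : ∑ t ∈ Finset.Ico p q, Z t
            = Z p + Z (p+1) + (∑ t ∈ Finset.Ico (p+2) (q-1), Z t) + Z (q-1) := by
          rw [← sum_Ico_glue Z (by omega : p ≤ p + 2) (by omega : p + 2 ≤ q)]
          rw [← sum_Ico_glue Z (by omega : (p:ℤ) + 2 ≤ q - 1) (by omega : q - 1 ≤ q)]
          have e1 : Finset.Ico p (p+2) = {p, p+1} := by ext t; simp [Finset.mem_Ico]; omega
          have e2 : Finset.Ico (q-1) q = {q-1} := by ext t; simp [Finset.mem_Ico]; omega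
          rw [e1, e2, Finset.sum_insert (by simp only [Finset.mem_singleton]; omega),
            Finset.sum_singleton, Finset.sum_singleton]
          ring
        have hmid : ∑ t ∈ Finset.Ico (p+2) (q-1), Z t = 0 := by
          apply Finset.sum_eq_zero
          intro x hx
          simp only [Finset.mem_Ico] at hx
          exact hint x (by omega) (by omega)
        have h1 := hc (p+1); have h2 := hc (q-1)
        rw [show p + 1 - 1 = p by ring, show p+1+1 = p+2 by ring] at h1
        rw [show q - 1 - 1 = q - 2 by ring, show q-1+1 = q by ring] at h2
        have hz1 : Z (p+2) = 0 := hint (p+2) (by omega) (by omega)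
        have hz2 : Z (q-2) = 0 := hint (q-2) (by omega) (by omega)
        have hb1 := hbet (p+1) (by omega) (by omega)
        have hb2 := hbet (q-1) (by omega) (by omega)
        rw [hsplit, hmid]
        omega
    have chain : ∀ N : ℕ, ∀ p q : ℤ, 1 ≤ Z p → 1 ≤ Z q → p < q → q - p ≤ N →
        Z p - Z q ≤ 2 * ∑ t ∈ Finset.Ico p q, Z t := by
      intro N
      induction N with
      | zero => intro p q _ _ h1 h2; omega
      | succ N ih =>
        intro p q hp hq hpq hN
        obtain ⟨r, hr1, hr2, hr3, hr4⟩ := next_ex p hp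
        rcases lt_trichotomy r q with h|h|h
        · have h1 := claimA p r hp hr3 hr1 hr4
          have h2 := ih r q hr3 hq h (by omega)
          rw [← sum_Ico_glue Z (le_of_lt hr1) (le_of_lt h)]
          omega
        · subst h; exact claimA p r hp hr3 hr1 hr4
        · have := hr4 q hpq h
          omega
    have hq : 1 ≤ Z (p0 + n) := by rw [hper]; exact hp0
    have hfin := chain n p0 (p0 + n) hp0 hq (by omega) (by omega)
    rw [hper] at hfin
    have hIco : ∑ t ∈ Finset.Ico p0 (p0 + n), Z t = G p0 := sum_Ico_int Z p0 n
    rw [hIco, hGall p0, hG0] at hfin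
    omega
  · push_neg at hpos
    apply Finset.sum_nonneg
    intro i _
    have h1 := hc i
    have h2 : Z ((i:ℤ) - 1) ≤ 0 := by have := hpos ((i:ℤ) - 1); omega
    have h3 : Z ((i:ℤ) + 1) ≤ 0 := by have := hpos ((i:ℤ) + 1); omega
    omega

section Lower

variable {m n : ℕ}

lemma fin_card_two : ∀ s : Finset (Fin 2),
    s.card = (if (0:Fin 2) ∈ s then 1 else 0) + (if (1:Fin 2) ∈ s then 1 else 0) := by decide

lemma fin_nonempty_two : ∀ s : Finset (Fin 2), s ≠ ∅ → ((0:Fin 2) ∈ s ∨ (1:Fin 2) ∈ s) := by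
  decide

lemma cycle_adj_cases [NeZero m] (hm : 2 ≤ m) {i u : Fin m} (h : (cycleGraph m).Adj i u) :
    i = u + 1 ∨ i = u - 1 := by
  rcases cycleGraph_adj'.mp h with h1 | h1
  · left
    have : i - u = 1 := by
      apply Fin.ext
      rw [h1]
      rw [Fin.val_one', Nat.mod_eq_of_lt (by omega)]
    have h2 := sub_eq_iff_eq_add.mp this
    rw [h2, add_comm]
  · right
    have : u - i = 1 := by
      apply Fin.ext
      rw [h1]
      rw [Fin.val_one', Nat.mod_eq_of_lt (by omega)]
    have h2 := sub_eq_iff_eq_add.mp this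
    rw [h2]
    rw [add_sub_cancel_left]

lemma column_cover [NeZero m] [NeZero n] (hm : 2 ≤ m) (hn : 2 ≤ n)
    (f : Fin m × Fin n → Finset (Fin 2))
    (hf : IsRainbowDominating (cycleGraph m □ cycleGraph n) 2 f)
    (j : Fin n) (c : Fin 2) :
    (univ : Finset (Fin m)) ⊆ ((((univ.filter (fun i => f (i,j) ≠ ∅))
      ∪ ((univ.filter (fun i : Fin m => c ∈ f (i,j))).image (· + 1)))
      ∪ ((univ.filter (fun i : Fin m => c ∈ f (i,j))).image (· - 1)))
      ∪ (univ.filter (fun i => c ∈ f (i,j-1))))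
      ∪ (univ.filter (fun i => c ∈ f (i,j+1))) := by
  intro i _
  simp only [Finset.mem_union, Finset.mem_filter, Finset.mem_image, Finset.mem_univ, true_and]
  by_cases hne : f (i,j) = ∅
  · obtain ⟨u, hadj, hmem⟩ := hf (i,j) hne c
    rw [SimpleGraph.boxProd_adj] at hadj
    rcases hadj with ⟨hadj1, h2⟩ | ⟨hadj2, h1⟩
    · -- vertical neighbor
      obtain ⟨u1, u2⟩ := u
      simp only at hadj1 h2 hmem
      subst h2
      rcases cycle_adj_cases hm hadj1 with h | h
      · left; left; left; right
        exact ⟨u1, hmem, h.symm⟩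
      · left; left; right
        exact ⟨u1, hmem, h.symm⟩
    · -- horizontal neighbor
      obtain ⟨u1, u2⟩ := u
      simp only at h1 hadj2 hmem
      subst h1
      rcases cycle_adj_cases hn hadj2 with h | h
      · left; right
        have : u2 = j - 1 := by rw [h, add_sub_cancel_right]
        rw [← this]; exact hmem
      · right
        have : u2 = j + 1 := by rw [h, sub_add_cancel]
        rw [← this]; exact hmem
  · left; left; left; left; exact hne

lemma column_ineq [NeZero m] [NeZero n] (hm : 2 ≤ m) (hn : 2 ≤ n)
    (f : Fin m × Fin n → Finset (Fin 2))
    (hf : IsRainbowDominating (cycleGraph m □ cycleGraph n) 2 f)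
    (j : Fin n) :
    2 * m ≤ (∑ i : Fin m, (f (i, j-1)).card) + 4 * (∑ i : Fin m, (f (i, j)).card)
        + (∑ i : Fin m, (f (i, j+1)).card) := by
  classical
  have hw : ∀ j' : Fin n, ∑ i : Fin m, (f (i, j')).card
      = (univ.filter (fun i : Fin m => (0:Fin 2) ∈ f (i,j'))).card
        + (univ.filter (fun i : Fin m => (1:Fin 2) ∈ f (i,j'))).card := by
    intro j'
    simp only [Finset.card_filter]
    rw [← Finset.sum_add_distrib]
    apply Finset.sum_congr rfl
    intro i _
    exact fin_card_two (f (i, j'))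
  have hcover : ∀ c : Fin 2, m ≤ (univ.filter (fun i : Fin m => f (i,j) ≠ ∅)).card
      + ((univ.filter (fun i : Fin m => c ∈ f (i,j))).card
        + (univ.filter (fun i : Fin m => c ∈ f (i,j))).card)
      + (univ.filter (fun i : Fin m => c ∈ f (i,j-1))).card
      + (univ.filter (fun i : Fin m => c ∈ f (i,j+1))).card := by
    intro c
    have h1 := Finset.card_le_card (column_cover hm hn f hf j c)
    rw [Finset.card_univ, Fintype.card_fin] at h1
    refine h1.trans ?_
    refine (Finset.card_union_le _ _).trans ?_
    have h3 := Finset.card_union_le (((univ.filter (fun i : Fin m => f (i,j) ≠ ∅))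
      ∪ ((univ.filter (fun i : Fin m => c ∈ f (i,j))).image (· + 1)))
      ∪ ((univ.filter (fun i : Fin m => c ∈ f (i,j))).image (· - 1)))
      (univ.filter (fun i : Fin m => c ∈ f (i,j-1)))
    have h4 := Finset.card_union_le ((univ.filter (fun i : Fin m => f (i,j) ≠ ∅))
      ∪ ((univ.filter (fun i : Fin m => c ∈ f (i,j))).image (· + 1)))
      ((univ.filter (fun i : Fin m => c ∈ f (i,j))).image (· - 1))
    have h5 := Finset.card_union_le (univ.filter (fun i : Fin m => f (i,j) ≠ ∅))
      ((univ.filter (fun i : Fin m => c ∈ f (i,j))).image (· + 1))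
    have h6 := Finset.card_image_le (s := univ.filter (fun i : Fin m => c ∈ f (i,j)))
      (f := (· + 1))
    have h7 := Finset.card_image_le (s := univ.filter (fun i : Fin m => c ∈ f (i,j)))
      (f := (· - 1))
    omega
  have hSle : (univ.filter (fun i : Fin m => f (i,j) ≠ ∅)).card
      ≤ (univ.filter (fun i : Fin m => (0:Fin 2) ∈ f (i,j))).card
        + (univ.filter (fun i : Fin m => (1:Fin 2) ∈ f (i,j))).card := by
    calc (univ.filter (fun i : Fin m => f (i,j) ≠ ∅)).card
        ≤ ((univ.filter (fun i : Fin m => (0:Fin 2) ∈ f (i,j)))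
          ∪ (univ.filter (fun i : Fin m => (1:Fin 2) ∈ f (i,j)))).card := by
          apply Finset.card_le_card
          intro i hi
          rw [Finset.mem_filter] at hi
          rcases fin_nonempty_two _ hi.2 with h | h
          · exact Finset.mem_union_left _ (by simp [h])
          · exact Finset.mem_union_right _ (by simp [h])
      _ ≤ _ := Finset.card_union_le _ _
  have hc0 := hcover 0
  have hc1 := hcover 1
  rw [hw (j-1), hw j, hw (j+1)]
  omega

end Lower

/-- the coloring pattern: row a, column b is colored -/
def pat (k a b : ℕ) : Prop :=
  (a < 3*k ∧ a % 3 = b % 3) ∨ (a = 3*k ∧ b % 3 < 2) ∨ (a = 3*k+1 ∧ b % 3 = 2)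

instance (k a b : ℕ) : Decidable (pat k a b) := by unfold pat; infer_instance

/-- parity color of column b -/
def pc (b : ℕ) : Fin 2 := if b % 2 = 0 then 0 else 1

lemma pc_ne {x y : ℕ} (h : x % 2 ≠ y % 2) : pc x ≠ pc y := by
  unfold pc
  split_ifs <;> first | (exfalso; omega) | decide

lemma fin2_mem (c x y : Fin 2) (h : x ≠ y) : c = x ∨ c = y := by
  revert c x y; decide

section FinHelpers

variable {m : ℕ}

lemma fin_one_val [NeZero m] (hm : 2 ≤ m) : (1 : Fin m).val = 1 := by
  rw [Fin.val_one', Nat.mod_eq_of_lt (by omega)]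

lemma val_add_one_s2 [NeZero m] (hm : 2 ≤ m) (i : Fin m) :
    (i + 1).val = if i.val = m - 1 then 0 else i.val + 1 := by
  have h1 : (i + 1).val = (i.val + (1:Fin m).val) % m := by
    rw [Fin.add_def]
  rw [h1, fin_one_val hm]
  have := i.isLt
  split_ifs with h
  · rw [h]
    have h2 : m - 1 + 1 = m := by omega
    rw [h2, Nat.mod_self]
  · exact Nat.mod_eq_of_lt (by omega)

lemma val_sub_one_s2 [NeZero m] (hm : 2 ≤ m) (i : Fin m) :
    (i - 1).val = if i.val = 0 then m - 1 else i.val - 1 := by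
  have h1 : (i - 1).val = (m - (1:Fin m).val + i.val) % m := by
    rw [Fin.sub_def]
  rw [h1, fin_one_val hm]
  have := i.isLt
  split_ifs with h
  · rw [h]
    have h2 : m - 1 + 0 = m - 1 := by omega
    rw [h2]
    exact Nat.mod_eq_of_lt (by omega)
  · have h2 : m - 1 + i.val = m + (i.val - 1) := by omega
    rw [h2, Nat.add_mod_left]
    exact Nat.mod_eq_of_lt (by omega)

lemma adj_add_one [NeZero m] (hm : 2 ≤ m) (i : Fin m) : (cycleGraph m).Adj i (i + 1) := by
  rw [cycleGraph_adj']
  right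
  rw [add_sub_cancel_left, fin_one_val hm]

lemma adj_sub_one [NeZero m] (hm : 2 ≤ m) (i : Fin m) : (cycleGraph m).Adj i (i - 1) := by
  rw [cycleGraph_adj']
  left
  rw [sub_sub_cancel, fin_one_val hm]

end FinHelpers

section Upper

variable {k s : ℕ}

lemma vert_wit (hk : 1 ≤ k) (hs : 1 ≤ s) (i : Fin (3*k+2)) (j : Fin (6*s))
    (hnp : ¬ pat k i.val j.val) :
    ∃ w : Fin (3*k+2), (cycleGraph (3*k+2)).Adj i w ∧ pat k w.val j.val := by
  haveI : NeZero (3*k+2) := ⟨by omega⟩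
  have hm : 2 ≤ 3*k+2 := by omega
  have ha := i.isLt
  have hb := j.isLt
  unfold pat at hnp ⊢
  by_cases h1 : i.val < 3*k
  · -- diagonal rows
    have hmod : j.val % 3 = (i.val + 1) % 3 ∨ j.val % 3 = (i.val + 2) % 3 := by omega
    rcases hmod with h | h
    · refine ⟨i + 1, adj_add_one hm i, ?_⟩
      rw [val_add_one_s2 hm i]
      split_ifs with hh
      · omega
      · omega
    · refine ⟨i - 1, adj_sub_one hm i, ?_⟩
      rw [val_sub_one_s2 hm i]
      split_ifs with hh
      · omega
      · omega
  · by_cases h2 : i.val = 3*k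
    · refine ⟨i + 1, adj_add_one hm i, ?_⟩
      rw [val_add_one_s2 hm i]
      split_ifs with hh
      · omega
      · omega
    · -- i.val = 3k+1
      refine ⟨i - 1, adj_sub_one hm i, ?_⟩
      rw [val_sub_one_s2 hm i]
      split_ifs with hh
      · omega
      · omega

lemma horiz_wit (hk : 1 ≤ k) (hs : 1 ≤ s) (i : Fin (3*k+2)) (j : Fin (6*s))
    (hnp : ¬ pat k i.val j.val) :
    ∃ w : Fin (6*s), (cycleGraph (6*s)).Adj j w ∧ pat k i.val w.val
      ∧ w.val % 2 ≠ j.val % 2 := by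
  haveI : NeZero (6*s) := ⟨by omega⟩
  have hn : 2 ≤ 6*s := by omega
  have ha := i.isLt
  have hb := j.isLt
  unfold pat at hnp ⊢
  by_cases h1 : i.val < 3*k
  · have hmod : j.val % 3 = (i.val + 1) % 3 ∨ j.val % 3 = (i.val + 2) % 3 := by omega
    rcases hmod with h | h
    · refine ⟨j - 1, adj_sub_one hn j, ?_, ?_⟩
      · rw [val_sub_one_s2 hn j]; split_ifs with hh <;> omega
      · rw [val_sub_one_s2 hn j]; split_ifs with hh <;> omega
    · refine ⟨j + 1, adj_add_one hn j, ?_, ?_⟩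
      · rw [val_add_one_s2 hn j]; split_ifs with hh <;> omega
      · rw [val_add_one_s2 hn j]; split_ifs with hh <;> omega
  · by_cases h2 : i.val = 3*k
    · -- j % 3 = 2, go right
      refine ⟨j + 1, adj_add_one hn j, ?_, ?_⟩
      · rw [val_add_one_s2 hn j]; split_ifs with hh <;> omega
      · rw [val_add_one_s2 hn j]; split_ifs with hh <;> omega
    · -- i.val = 3k+1, j % 3 < 2
      by_cases h3 : j.val % 3 = 0
      · refine ⟨j - 1, adj_sub_one hn j, ?_, ?_⟩
        · rw [val_sub_one_s2 hn j]; split_ifs with hh <;> omega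
        · rw [val_sub_one_s2 hn j]; split_ifs with hh <;> omega
      · refine ⟨j + 1, adj_add_one hn j, ?_, ?_⟩
        · rw [val_add_one_s2 hn j]; split_ifs with hh <;> omega
        · rw [val_add_one_s2 hn j]; split_ifs with hh <;> omega

/-- the constructed function -/
def fcon (k s : ℕ) (v : Fin (3*k+2) × Fin (6*s)) : Finset (Fin 2) :=
  if pat k v.1.val v.2.val then {pc v.2.val} else ∅

lemma fcon_dominating (hk : 1 ≤ k) (hs : 1 ≤ s) :
    IsRainbowDominating (cycleGraph (3*k+2) □ cycleGraph (6*s)) 2 (fcon k s) := by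
  intro v hv c
  obtain ⟨i, j⟩ := v
  have hnp : ¬ pat k i.val j.val := by
    intro hp
    unfold fcon at hv
    simp only [hp, if_true] at hv
    exact absurd hv (Finset.singleton_ne_empty _)
  obtain ⟨w, hadj, hpat⟩ := vert_wit hk hs i j hnp
  obtain ⟨w', hadj', hpat', hpar⟩ := horiz_wit hk hs i j hnp
  have hne : pc j.val ≠ pc w'.val := pc_ne (fun hc => hpar hc.symm)
  rcases fin2_mem c (pc j.val) (pc w'.val) hne with hc | hc
  · refine ⟨(w, j), ?_, ?_⟩
    · rw [SimpleGraph.boxProd_adj]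
      exact Or.inl ⟨hadj, rfl⟩
    · unfold fcon
      simp only [hpat, if_true]
      rw [hc]; exact Finset.mem_singleton_self _
  · refine ⟨(i, w'), ?_, ?_⟩
    · rw [SimpleGraph.boxProd_adj]
      exact Or.inr ⟨hadj', rfl⟩
    · unfold fcon
      simp only [hpat', if_true]
      rw [hc]; exact Finset.mem_singleton_self _

-- counting
lemma card_filter_range_succ (p : ℕ → Prop) [DecidablePred p] (n : ℕ) :
    ((Finset.range (n+1)).filter p).card = ((Finset.range n).filter p).card
      + if p n then 1 else 0 := by
  rw [Finset.range_add_one, Finset.filter_insert]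
  split_ifs
  · rw [Finset.card_insert_of_notMem (by simp)]
  · omega

lemma count_mod3_range (s' r : ℕ) (hr : r < 3) :
    ((Finset.range (3*s')).filter (fun b => b % 3 = r)).card = s' := by
  induction s' with
  | zero => simp
  | succ t ih =>
    have e : 3*(t+1) = (3*t+1+1)+1 := by ring
    rw [e, card_filter_range_succ, card_filter_range_succ, card_filter_range_succ, ih]
    split_ifs <;> omega

lemma sum_ite_fin (n : ℕ) (p : ℕ → Prop) [DecidablePred p] :
    (∑ j : Fin n, if p j.val then 1 else 0)
      = ((Finset.range n).filter p).card := by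
  rw [Finset.card_filter]
  exact Fin.sum_univ_eq_sum_range (fun b => if p b then 1 else 0) n

lemma fcon_weight (hk : 1 ≤ k) (hs : 1 ≤ s) :
    ∑ v : Fin (3*k+2) × Fin (6*s), ((fcon k s) v).card = (k+1) * (6*s) := by
  classical
  rw [Fintype.sum_prod_type]
  have hcard : ∀ (i : Fin (3*k+2)) (j : Fin (6*s)),
      ((fcon k s) (i,j)).card = if pat k i.val j.val then 1 else 0 := by
    intro i j
    unfold fcon
    split_ifs <;> simp
  have hrow : ∀ i : Fin (3*k+2), (∑ j : Fin (6*s), ((fcon k s) (i,j)).card)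
      = if i.val = 3*k then 4*s else 2*s := by
    intro i
    have ha := i.isLt
    by_cases h1 : i.val < 3*k
    · have : ∀ j : Fin (6*s), ((fcon k s) (i,j)).card
          = if j.val % 3 = i.val % 3 then 1 else 0 := by
        intro j
        rw [hcard i j]
        by_cases hp : pat k i.val j.val <;> simp only [hp, ↓reduceIte] <;> unfold pat at hp <;>
          split_ifs <;> omega
      rw [if_neg (by omega)]
      calc (∑ j : Fin (6*s), ((fcon k s) (i,j)).card)
          = ∑ j : Fin (6*s), if j.val % 3 = i.val % 3 then 1 else 0 :=
            Finset.sum_congr rfl (fun j _ => this j)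
        _ = ((Finset.range (6*s)).filter (fun b => b % 3 = i.val % 3)).card :=
            sum_ite_fin (6*s) (fun b => b % 3 = i.val % 3)
        _ = 2*s := by
            rw [show 6*s = 3*(2*s) by ring]
            exact count_mod3_range (2*s) _ (by omega)
    · by_cases h2 : i.val = 3*k
      · have : ∀ j : Fin (6*s), ((fcon k s) (i,j)).card
            = (if j.val % 3 = 0 then 1 else 0) + (if j.val % 3 = 1 then 1 else 0) := by
          intro j
          rw [hcard i j]
          by_cases hp : pat k i.val j.val <;> simp only [hp, ↓reduceIte] <;> unfold pat at hp <;>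
            split_ifs <;> omega
        rw [if_pos h2]
        calc (∑ j : Fin (6*s), ((fcon k s) (i,j)).card)
            = ∑ j : Fin (6*s), ((if j.val % 3 = 0 then 1 else 0)
                + (if j.val % 3 = 1 then 1 else 0)) :=
              Finset.sum_congr rfl (fun j _ => this j)
          _ = (∑ j : Fin (6*s), if j.val % 3 = 0 then 1 else 0)
                + (∑ j : Fin (6*s), if j.val % 3 = 1 then 1 else 0) :=
              Finset.sum_add_distrib
          _ = 4*s := by
              rw [sum_ite_fin (6*s) (fun b => b % 3 = 0), sum_ite_fin (6*s) (fun b => b % 3 = 1)]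
              rw [show 6*s = 3*(2*s) by ring]
              rw [count_mod3_range (2*s) 0 (by omega), count_mod3_range (2*s) 1 (by omega)]
              ring
      · -- i.val = 3k+1
        have h3 : i.val = 3*k+1 := by omega
        have : ∀ j : Fin (6*s), ((fcon k s) (i,j)).card
            = if j.val % 3 = 2 then 1 else 0 := by
          intro j
          rw [hcard i j]
          by_cases hp : pat k i.val j.val <;> simp only [hp, ↓reduceIte] <;> unfold pat at hp <;>
            split_ifs <;> omega
        rw [if_neg (by omega)]
        calc (∑ j : Fin (6*s), ((fcon k s) (i,j)).card)
            = ∑ j : Fin (6*s), if j.val % 3 = 2 then 1 else 0 :=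
              Finset.sum_congr rfl (fun j _ => this j)
          _ = 2*s := by
              rw [sum_ite_fin (6*s) (fun b => b % 3 = 2),
                show 6*s = 3*(2*s) by ring, count_mod3_range (2*s) 2 (by omega)]
  calc ∑ i : Fin (3*k+2), ∑ j : Fin (6*s), ((fcon k s) (i,j)).card
      = ∑ i : Fin (3*k+2), (if i.val = 3*k then 4*s else 2*s) :=
        Finset.sum_congr rfl (fun i _ => hrow i)
    _ = ∑ i : Fin (3*k+2), ((if i.val = 3*k then 2*s else 0) + 2*s) := by
        apply Finset.sum_congr rfl; intro i _; split_ifs <;> omega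
    _ = (∑ i : Fin (3*k+2), if i.val = 3*k then 2*s else 0)
        + (3*k+2) * (2*s) := by
        rw [Finset.sum_add_distrib, Finset.sum_const, Finset.card_univ, Fintype.card_fin,
          smul_eq_mul]
    _ = 2*s + (3*k+2)*(2*s) := by
        congr 1
        rw [show (∑ i : Fin (3*k+2), if i.val = 3*k then 2*s else 0)
          = ∑ j ∈ Finset.range (3*k+2), if j = 3*k then 2*s else 0 from
            Fin.sum_univ_eq_sum_range (fun b => if b = 3*k then 2*s else 0) (3*k+2)]
        rw [Finset.sum_ite_eq' (Finset.range (3*k+2)) (3*k) (fun _ => 2*s)]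
        rw [if_pos (Finset.mem_range.mpr (by omega))]
    _ = (k+1) * (6*s) := by ring

end Upper

open Fin.CommRing in
lemma total_lower_bound (m n k : ℕ) (hm : m = 3*k+2) (hn2 : 2 ≤ n) (hk : 1 ≤ k)
    (f : Fin m × Fin n → Finset (Fin 2))
    (hf : IsRainbowDominating (cycleGraph m □ cycleGraph n) 2 f) :
    (k+1) * n ≤ ∑ v : Fin m × Fin n, (f v).card := by
  classical
  haveI : NeZero m := ⟨by omega⟩
  haveI : NeZero n := ⟨by omega⟩
  set W : Fin n → ℕ := fun j => ∑ i : Fin m, (f (i,j)).card with hW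
  have htot : ∑ v : Fin m × Fin n, (f v).card = ∑ j : Fin n, W j := by
    rw [Fintype.sum_prod_type]
    rw [Finset.sum_comm]
  set Z : ℤ → ℤ := fun t => (W ((t : ℤ) : Fin n) : ℤ) - (k+1) with hZ
  have hper : ∀ t : ℤ, Z (t + n) = Z t := by
    intro t
    simp only [hZ]
    congr 2
    push_cast
    rw [Fin.natCast_self]
    ring
  have hc : ∀ t : ℤ, -2 ≤ Z (t-1) + 4 * Z t + Z (t+1) := by
    intro t
    have hcol := column_ineq (m := m) (n := n) (by omega) (by omega) f hf ((t : ℤ) : Fin n)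
    have e1 : ((t - 1 : ℤ) : Fin n) = ((t : ℤ) : Fin n) - 1 := by push_cast; ring
    have e2 : ((t + 1 : ℤ) : Fin n) = ((t : ℤ) : Fin n) + 1 := by push_cast; ring
    simp only [hZ, e1, e2]
    have hcast : (2 * m : ℤ) ≤ (W (((t : ℤ) : Fin n) - 1) : ℤ) + 4 * (W ((t : ℤ) : Fin n) : ℤ)
        + (W (((t : ℤ) : Fin n) + 1) : ℤ) := by
      exact_mod_cast hcol
    omega
  have hkey := cyclic_sum_nonneg n (by omega) Z hper hc
  have hsum : ∑ i ∈ Finset.range n, Z i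
      = (∑ j : Fin n, (W j : ℤ)) - n * (k+1) := by
    rw [hZ]
    rw [Finset.sum_sub_distrib, Finset.sum_const, Finset.card_range]
    simp only [nsmul_eq_mul]
    congr 1
    rw [← Fin.sum_univ_eq_sum_range (fun i : ℕ => (W ((i : ℤ) : Fin n) : ℤ)) n]
    apply Finset.sum_congr rfl
    intro j _
    congr 1
    push_cast
    rfl
  rw [htot]
  have hfin : (((k:ℤ)+1) * n) ≤ ∑ j : Fin n, (W j : ℤ) := by
    rw [hsum] at hkey
    have hmc : ((n:ℕ):ℤ) * ((k:ℤ)+1) = ((k:ℤ)+1) * ((n:ℕ):ℤ) := mul_comm _ _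
    linarith
  have : (∑ j : Fin n, (W j : ℤ)) = ((∑ j : Fin n, W j : ℕ) : ℤ) := by push_cast; rfl
  rw [this] at hfin
  exact_mod_cast hfin

end Aux

theorem two_rainbow_dom_cycles_mod2 (m n : ℕ) (hm : 3 ≤ m) (hn : 6 ≤ n)
    (hn6 : n % 6 = 0) (hm3 : m % 3 = 2) :
    rainbowDomNum (cycleGraph m □ cycleGraph n) 2 = ((m + 1) / 3) * n := by
  obtain ⟨k, hk, rfl⟩ : ∃ k, 1 ≤ k ∧ m = 3*k+2 := ⟨m/3, by omega, by omega⟩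
  obtain ⟨s, hs, rfl⟩ : ∃ s, 1 ≤ s ∧ n = 6*s := ⟨n/6, by omega, by omega⟩
  have hq : ((3*k+2+1)/3) = k + 1 := by omega
  rw [hq]
  unfold rainbowDomNum
  set S : Set ℕ := {w | ∃ f : (Fin (3*k+2) × Fin (6*s)) → Finset (Fin 2),
      IsRainbowDominating (cycleGraph (3*k+2) □ cycleGraph (6*s)) 2 f
        ∧ w = ∑ v, (f v).card} with hSdef
  have hmem : (k+1) * (6*s) ∈ S :=
    ⟨fcon k s, fcon_dominating hk hs, (fcon_weight hk hs).symm⟩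
  have hne : S.Nonempty := ⟨_, hmem⟩
  apply le_antisymm
  · exact Nat.sInf_le hmem
  · obtain ⟨g, hg, hw⟩ := Nat.sInf_mem hne
    rw [hw]
    exact total_lower_bound (3*k+2) (6*s) k rfl (by omega) hk g hg
end

section
/- Let G be a finite r-regular simple graph and k ≥ 1. Then the k-rainbow domination number satisfies γ_{rk}(G) ≥ (k/(r+k))·|V(G)|. -/
open SimpleGraph Finset

lemma key_bound {V : Type*} [Fintype V] (G : SimpleGraph V)
    [DecidableRel G.Adj] (r k : ℕ) (hreg : G.IsRegularOfDegree r)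
    (f : V → Finset (Fin k)) (hf : IsRainbowDominating G k f) :
    k * Fintype.card V ≤ (r + k) * ∑ v, (f v).card := by
  classical
  set W := ∑ v, (f v).card with hW
  set E := Finset.univ.filter (fun v => f v = ∅) with hE
  set N := Finset.univ.filter (fun v => f v ≠ ∅) with hN
  have hsplit : E.card + N.card = Fintype.card V := by
    rw [hE, hN, Finset.card_filter_add_card_filter_not, Finset.card_univ]
  -- N.card ≤ W
  have h1 : N.card ≤ W := by
    calc N.card = ∑ v ∈ N, 1 := by simp
    _ ≤ ∑ v ∈ N, (f v).card := by
        apply Finset.sum_le_sum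
        intro v hv
        simp only [hN, Finset.mem_filter] at hv
        exact Finset.card_pos.mpr (Finset.nonempty_iff_ne_empty.mpr hv.2)
    _ ≤ ∑ v, (f v).card := Finset.sum_le_sum_of_subset (Finset.filter_subset _ _)
  -- k * E.card ≤ r * W
  have h2 : k * E.card ≤ r * W := by
    have hv : ∀ v ∈ E, k ≤ ∑ u ∈ G.neighborFinset v, (f u).card := by
      intro v hv
      simp only [hE, Finset.mem_filter] at hv
      have hsub : (Finset.univ : Finset (Fin k)) ⊆ (G.neighborFinset v).biUnion f := by
        intro c _
        obtain ⟨u, hadj, hcu⟩ := hf v hv.2 c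
        exact Finset.mem_biUnion.mpr ⟨u, (G.mem_neighborFinset v u).mpr hadj, hcu⟩
      calc k = (Finset.univ : Finset (Fin k)).card := by simp
      _ ≤ ((G.neighborFinset v).biUnion f).card := Finset.card_le_card hsub
      _ ≤ ∑ u ∈ G.neighborFinset v, (f u).card := Finset.card_biUnion_le
    calc k * E.card = ∑ v ∈ E, k := by rw [Finset.sum_const, smul_eq_mul, mul_comm]
    _ ≤ ∑ v ∈ E, ∑ u ∈ G.neighborFinset v, (f u).card := Finset.sum_le_sum hv
    _ ≤ ∑ v, ∑ u ∈ G.neighborFinset v, (f u).card :=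
        Finset.sum_le_sum_of_subset (Finset.filter_subset _ _)
    _ = ∑ v, ∑ u, if G.Adj v u then (f u).card else 0 := by
        apply Finset.sum_congr rfl
        intro v _
        rw [neighborFinset_eq_filter, ← Finset.sum_filter]
    _ = ∑ u, ∑ v, if G.Adj v u then (f u).card else 0 := Finset.sum_comm
    _ = ∑ u, (G.neighborFinset u).card * (f u).card := by
        apply Finset.sum_congr rfl
        intro u _
        rw [← Finset.sum_filter]
        rw [Finset.sum_const, smul_eq_mul]
        congr 1
        apply Finset.card_bij (fun v _ => v)
        · intro v hv
          simp only [Finset.mem_filter, Finset.mem_univ, true_and] at hv ⊢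
          rw [mem_neighborFinset]
          exact hv.symm
        · intro a b _ _ h; exact h
        · intro v hv
          rw [mem_neighborFinset] at hv
          exact ⟨v, by simp [hv.symm], rfl⟩
    _ = ∑ u, r * (f u).card := by
        apply Finset.sum_congr rfl
        intro u _
        show G.degree u * (f u).card = r * (f u).card
        rw [hreg u]
    _ = r * W := by rw [hW, Finset.mul_sum]
  calc k * Fintype.card V = k * E.card + k * N.card := by rw [← hsplit, Nat.mul_add]
  _ ≤ r * W + k * W := Nat.add_le_add h2 (Nat.mul_le_mul_left k h1)
  _ = (r + k) * W := (Nat.add_mul r k W).symm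

theorem rainbow_dom_regular_lower_bound {V : Type*} [Fintype V] (G : SimpleGraph V)
    [DecidableRel G.Adj] (r k : ℕ) (hk : 1 ≤ k) (hreg : G.IsRegularOfDegree r) :
    ((k : ℚ) / ((r : ℚ) + k)) * Fintype.card V ≤ rainbowDomNum G k := by
  classical
  have hne : {w | ∃ f : V → Finset (Fin k), IsRainbowDominating G k f ∧
      w = ∑ v, (f v).card}.Nonempty := by
    refine ⟨∑ v, (Finset.univ : Finset (Fin k)).card, fun _ => Finset.univ, ?_, rfl⟩
    intro v hv
    exfalso
    have : (0:ℕ) < k := hk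
    have : (Finset.univ : Finset (Fin k)).Nonempty := by
      simpa [Finset.card_univ] using Finset.card_pos.mp (by simpa using this)
    exact Finset.nonempty_iff_ne_empty.mp this hv
  obtain ⟨f, hf, hw⟩ := Nat.sInf_mem hne
  have hkey := key_bound G r k hreg f hf
  have hWeq : rainbowDomNum G k = ∑ v, (f v).card := hw
  have hrk : (0:ℚ) < (r:ℚ) + k := by positivity
  rw [div_mul_eq_mul_div, div_le_iff₀ hrk, hWeq]
  have hkey' : k * Fintype.card V ≤ (∑ v, (f v).card) * (r + k) := by
    calc k * Fintype.card V ≤ (r + k) * ∑ v, (f v).card := hkey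
    _ = (∑ v, (f v).card) * (r + k) := Nat.mul_comm _ _
  exact_mod_cast hkey'
end

section
/- Let G be a finite 4-regular simple graph. Then γ_{r2}(G) ≥ |V(G)|/3. -/
open SimpleGraph Finset

lemma key_count {V : Type*} [Fintype V] (G : SimpleGraph V) [DecidableRel G.Adj]
    (hreg : G.IsRegularOfDegree 4) (f : V → Finset (Fin 2))
    (hf : IsRainbowDominating G 2 f) :
    Fintype.card V ≤ 3 * ∑ v, (f v).card := by
  classical
  set W := ∑ v, (f v).card with hW
  set S : Finset V := Finset.univ.filter (fun v => f v = ∅) with hS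
  have hT : Sᶜ.card ≤ W := by
    calc Sᶜ.card = ∑ _v ∈ Sᶜ, 1 := by simp
    _ ≤ ∑ v ∈ Sᶜ, (f v).card := Finset.sum_le_sum (fun v hv => by
        simp only [hS, Finset.mem_compl, Finset.mem_filter, Finset.mem_univ,
          true_and] at hv
        exact Nat.one_le_iff_ne_zero.mpr (by simpa [Finset.card_eq_zero] using hv))
    _ ≤ W := Finset.sum_le_sum_of_subset (Finset.subset_univ _)
  have hSbound : ∀ v ∈ S, 2 ≤ ∑ u ∈ G.neighborFinset v, (f u).card := by
    intro v hv
    simp only [hS, Finset.mem_filter, Finset.mem_univ, true_and] at hv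
    have hcov : (Finset.univ : Finset (Fin 2)) ⊆ (G.neighborFinset v).biUnion f := by
      intro c _
      obtain ⟨u, hu, hc⟩ := hf v hv c
      exact Finset.mem_biUnion.mpr ⟨u, (G.mem_neighborFinset v u).mpr hu, hc⟩
    calc 2 = (Finset.univ : Finset (Fin 2)).card := by simp
    _ ≤ ((G.neighborFinset v).biUnion f).card := Finset.card_le_card hcov
    _ ≤ ∑ u ∈ G.neighborFinset v, (f u).card := Finset.card_biUnion_le
  have hdouble : ∑ v : V, ∑ u ∈ G.neighborFinset v, (f u).card = 4 * W := by
    rw [Finset.sum_comm' (s := Finset.univ) (t := fun v => G.neighborFinset v)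
      (t' := Finset.univ) (s' := fun u => G.neighborFinset u) (fun v u => by
      simp only [Finset.mem_univ, true_and, and_true, mem_neighborFinset]
      exact G.adj_comm v u)]
    have h1 : ∀ u : V, ∑ _v ∈ G.neighborFinset u, (f u).card = 4 * (f u).card := by
      intro u
      rw [Finset.sum_const, smul_eq_mul]
      have := hreg u
      rw [SimpleGraph.degree] at this
      rw [this]
    simp only [h1, hW, Finset.mul_sum]
  have hSle : 2 * S.card ≤ 4 * W := by
    calc 2 * S.card = ∑ _v ∈ S, 2 := by simp [mul_comm]
    _ ≤ ∑ v ∈ S, ∑ u ∈ G.neighborFinset v, (f u).card := Finset.sum_le_sum hSbound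
    _ ≤ ∑ v : V, ∑ u ∈ G.neighborFinset v, (f u).card :=
        Finset.sum_le_sum_of_subset (Finset.subset_univ _)
    _ = 4 * W := hdouble
  have hcard : S.card + Sᶜ.card = Fintype.card V := Finset.card_add_card_compl S
  omega

theorem two_rainbow_dom_four_regular_lower_bound {V : Type*} [Fintype V] (G : SimpleGraph V)
    [DecidableRel G.Adj] (hreg : G.IsRegularOfDegree 4) :
    (Fintype.card V : ℚ) / 3 ≤ rainbowDomNum G 2 := by
  classical
  have hne : {w | ∃ f : V → Finset (Fin 2), IsRainbowDominating G 2 f ∧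
      w = ∑ v, (f v).card}.Nonempty := by
    refine ⟨∑ v : V, ((Finset.univ : Finset (Fin 2))).card,
      fun _ => Finset.univ, ?_, rfl⟩
    intro v hv
    exact absurd hv Finset.univ_nonempty.ne_empty
  have hmem : rainbowDomNum G 2 ∈ {w | ∃ f : V → Finset (Fin 2),
      IsRainbowDominating G 2 f ∧ w = ∑ v, (f v).card} := Nat.sInf_mem hne
  obtain ⟨f, hf, heq⟩ := hmem
  have hk := key_count G hreg f hf
  rw [← heq] at hk
  rw [div_le_iff₀ (by norm_num : (0:ℚ) < 3)]
  have : (Fintype.card V : ℚ) ≤ 3 * rainbowDomNum G 2 := by exact_mod_cast hk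
  linarith
end

section
/- Let f be a 2-rainbow dominating function of C_m □ C_n of minimum weight, write m = 3k + ℓ with ℓ ≡ m (mod 3), ℓ ∈ {0,1,2}, and let s_i denote the weight of f on the i-th column. Fix i, let s_min = min{s_{i-1}, s_{i+1}} and s_max = max{s_{i-1}, s_{i+1}}. If k ≥ s_min, then s_max ≥ 2m − 4·s_i − s_min ≥ 5k + 2ℓ − 4·s_i. -/
open SimpleGraph Finset

private lemma cycle_nbr {m : ℕ} [NeZero m] (hm : 3 ≤ m) {i u : Fin m}
    (h : (cycleGraph m).Adj i u) : u = i - 1 ∨ u = i + 1 := by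
  rw [SimpleGraph.cycleGraph_adj'] at h
  have h1 : ((1 : Fin m)).val = 1 := by
    simp [Fin.val_one', Nat.mod_eq_of_lt (show 1 < m by omega)]
  rcases h with h | h
  · left
    have h2 : i - u = 1 := Fin.ext (by rw [h, h1])
    have h3 := sub_eq_iff_eq_add.mp h2
    rw [eq_sub_iff_add_eq, add_comm]
    exact h3.symm
  · right
    have h2 : u - i = 1 := Fin.ext (by rw [h, h1])
    have h3 := sub_eq_iff_eq_add.mp h2
    rw [h3, add_comm]

private lemma box_nbr {m n : ℕ} [NeZero m] [NeZero n] (hm : 3 ≤ m) (hn : 3 ≤ n) {i : Fin m} {j : Fin n}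
    {u : Fin m × Fin n} (h : (cycleGraph m □ cycleGraph n).Adj (i, j) u) :
    u = (i - 1, j) ∨ u = (i + 1, j) ∨ u = (i, j - 1) ∨ u = (i, j + 1) := by
  rw [SimpleGraph.boxProd_adj] at h
  obtain ⟨u1, u2⟩ := u
  rcases h with ⟨h, rfl⟩ | ⟨h, rfl⟩
  · rcases cycle_nbr hm h with rfl | rfl
    · exact Or.inl rfl
    · exact Or.inr (Or.inl rfl)
  · rcases cycle_nbr hn h with rfl | rfl
    · exact Or.inr (Or.inr (Or.inl rfl))
    · exact Or.inr (Or.inr (Or.inr rfl))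

theorem column_weight_ineq_minmax (m n k ℓ : ℕ) [NeZero n] (hm : 3 ≤ m) (hn : 3 ≤ n)
    (hkl : m = 3 * k + ℓ) (hℓ : ℓ < 3)
    (f : Fin m × Fin n → Finset (Fin 2))
    (hf : IsRainbowDominating (cycleGraph m □ cycleGraph n) 2 f)
    (hmin : ∑ v, (f v).card = rainbowDomNum (cycleGraph m □ cycleGraph n) 2)
    (s : Fin n → ℕ) (hs : ∀ j, s j = ∑ i : Fin m, (f (i, j)).card) (j : Fin n)
    (hk : min (s (j - 1)) (s (j + 1)) ≤ k) :
    (max (s (j - 1)) (s (j + 1)) : ℤ) ≥ 2 * m - 4 * s j - min (s (j - 1)) (s (j + 1)) ∧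
      2 * (m : ℤ) - 4 * s j - min (s (j - 1)) (s (j + 1)) ≥ 5 * k + 2 * ℓ - 4 * s j := by
  haveI : NeZero m := ⟨by omega⟩
  have key : ∀ i : Fin m, 2 ≤ (f (i - 1, j)).card + (f (i + 1, j)).card +
      (f (i, j - 1)).card + (f (i, j + 1)).card + 2 * (f (i, j)).card := by
    intro i
    by_cases hE : f (i, j) = ∅
    · obtain ⟨u0, hadj0, hc0⟩ := hf (i, j) hE 0
      obtain ⟨u1, hadj1, hc1⟩ := hf (i, j) hE 1
      by_cases heq : u0 = u1
      · subst heq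
        have h2 : 2 ≤ (f u0).card := Finset.one_lt_card.mpr ⟨0, hc0, 1, hc1, by decide⟩
        rcases box_nbr hm hn hadj0 with rfl | rfl | rfl | rfl <;> omega
      · have h01 : 1 ≤ (f u0).card := Finset.card_pos.mpr ⟨_, hc0⟩
        have h11 : 1 ≤ (f u1).card := Finset.card_pos.mpr ⟨_, hc1⟩
        rcases box_nbr hm hn hadj0 with rfl | rfl | rfl | rfl <;>
          rcases box_nbr hm hn hadj1 with rfl | rfl | rfl | rfl <;>
          first | exact absurd rfl heq | omega
    · have : 1 ≤ (f (i, j)).card :=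
        Finset.card_pos.mpr (Finset.nonempty_iff_ne_empty.mpr hE)
      omega
  have hsub : ∑ i : Fin m, (f (i - 1, j)).card = s j := by
    rw [hs]
    exact Fintype.sum_equiv (Equiv.subRight (1 : Fin m))
      (fun i => (f (i - 1, j)).card) (fun i => (f (i, j)).card) (fun i => rfl)
  have hadd : ∑ i : Fin m, (f (i + 1, j)).card = s j := by
    rw [hs]
    exact Fintype.sum_equiv (Equiv.addRight (1 : Fin m))
      (fun i => (f (i + 1, j)).card) (fun i => (f (i, j)).card) (fun i => rfl)
  have hsum : 2 * m ≤ s (j - 1) + s (j + 1) + 4 * s j := by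
    have h := Finset.sum_le_sum (fun i (_ : i ∈ Finset.univ) => key i)
    simp only [Finset.sum_add_distrib, Finset.sum_const, Finset.card_univ,
      Fintype.card_fin, smul_eq_mul, ← Finset.mul_sum] at h
    rw [hsub, hadd, ← hs, ← hs, ← hs] at h
    omega
  constructor <;> omega
end

section
/- Let m ≥ 3 and n ≥ 3, and write m = 3k + ℓ with ℓ ≡ m (mod 3), ℓ ∈ {0,1,2}. Then γ_{r2}(C_m □ C_n) ≥ k·n + ℓ·n/2 = mn/3 + ℓ·n/6. -/
open SimpleGraph Finset

set_option maxHeartbeats 1000000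

namespace TwoRainbowAux

/-- The interface potential (twice the actual potential), as a function of the
column weight `w` and the column's horizontal-need count `n`. -/
private def gam (m cap w n : ℤ) : ℤ :=
  max 0 (max (4*(cap+1) - 4*w - 3*(max 0 (n - cap))) (2*m + cap + 4 - 4*w - n))

private lemma gam_ub (m cap w n : ℤ) :
    gam m cap w n ≤ 0 ∨
      (gam m cap w n ≤ 4*(cap+1) - 4*w ∧ n ≤ cap) ∨
      (gam m cap w n ≤ 4*(cap+1) - 4*w - 3*(n - cap) ∧ cap ≤ n) ∨
      gam m cap w n ≤ 2*m + cap + 4 - 4*w - n := by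
  unfold gam
  rcases le_total (n - cap) 0 with h | h
  · rw [max_eq_left h]; omega
  · rw [max_eq_right h]; omega

private lemma gam_lbs (m cap w n : ℤ) :
    0 ≤ gam m cap w n ∧ 2*m + cap + 4 - 4*w - n ≤ gam m cap w n ∧
      ((4*(cap+1) - 4*w ≤ gam m cap w n ∧ n ≤ cap) ∨
        (4*(cap+1) - 4*w - 3*(n - cap) ≤ gam m cap w n ∧ cap ≤ n)) := by
  unfold gam
  rcases le_total (n - cap) 0 with h | h
  · rw [max_eq_left h]; omega
  · rw [max_eq_right h]; omega

/-- The key arithmetic inequality for the potential. -/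
private lemma T1 (k l wa wb wc na nb nc : ℤ)
    (hl0 : 0 ≤ l) (hl3 : l < 3)
    (hwa : 0 ≤ wa) (hwb : 0 ≤ wb) (hwc : 0 ≤ wc)
    (hna : 0 ≤ na) (hnb : 0 ≤ nb) (hnc : 0 ≤ nc)
    (h1 : nb ≤ wa + wc)
    (h2 : 2*(3*k+l) ≤ na + 4*wa) (h3 : 2*(3*k+l) ≤ nc + 4*wc)
    (h4 : 2*(3*k+l) ≤ nb + 4*wb)
    (h5 : na + wa ≤ 2*(3*k+l)) (h6 : nc + wc ≤ 2*(3*k+l)) (h7 : nb + wb ≤ 2*(3*k+l)) :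
    gam (3*k+l) (2*k+l) wa na + gam (3*k+l) (2*k+l) wc nc + 4*(3*k+l) + 2*l
      ≤ 2 * gam (3*k+l) (2*k+l) wb nb + 8*wb + 2*wa + 2*wc := by
  obtain ⟨hB0, hB2, hB1⟩ := gam_lbs (3*k+l) (2*k+l) wb nb
  have hA0 : (0:ℤ) ≤ gam (3*k+l) (2*k+l) wa na := (gam_lbs _ _ _ _).1
  have hC0 : (0:ℤ) ≤ gam (3*k+l) (2*k+l) wc nc := (gam_lbs _ _ _ _).1
  rcases gam_ub (3*k+l) (2*k+l) wa na with hA | ⟨hA, hA'⟩ | ⟨hA, hA'⟩ | hA <;>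
    rcases gam_ub (3*k+l) (2*k+l) wc nc with hC | ⟨hC, hC'⟩ | ⟨hC, hC'⟩ | hC <;>
      rcases hB1 with ⟨hB1, hB1'⟩ | ⟨hB1, hB1'⟩ <;>
        omega

section core
variable {M N : ℕ} (f : Fin (M+3) × Fin (N+3) → Finset (Fin 2))

/-- Weight of column `j`. -/
private def colw (j : Fin (N+3)) : ℕ := ∑ i : Fin (M+3), (f (i,j)).card

/-- Number of colors that cell `v` (if empty) needs from its horizontal neighbors. -/
private def cneed (v : Fin (M+3) × Fin (N+3)) : ℕ :=
  if f v = ∅ then ((univ : Finset (Fin 2)) \ (f (v.1 - 1, v.2) ∪ f (v.1 + 1, v.2))).card else 0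

/-- Horizontal-need count of column `j`. -/
private def coln (j : Fin (N+3)) : ℕ := ∑ i : Fin (M+3), cneed f (i,j)

private lemma nbr_cases {i x : Fin (M+3)} (h : (cycleGraph (M+3)).Adj i x) :
    x = i - 1 ∨ x = i + 1 := by
  rw [cycleGraph_adj'] at h
  rcases h with h | h
  · left
    have h2 : i - x = 1 := by apply Fin.ext; rw [h]; simp [Fin.val_one]
    rw [← h2]; abel
  · right
    have h2 : x - i = 1 := by apply Fin.ext; rw [h]; simp [Fin.val_one]
    rw [← h2]; abel

private lemma C1 (hf : IsRainbowDominating (cycleGraph (M+3) □ cycleGraph (N+3)) 2 f)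
    (j : Fin (N+3)) : coln f j ≤ colw f (j-1) + colw f (j+1) := by
  unfold coln colw
  rw [← Finset.sum_add_distrib]
  apply Finset.sum_le_sum
  intro i _
  unfold cneed
  dsimp only
  by_cases h : f (i, j) = ∅
  · rw [if_pos h]
    have hsub : (univ : Finset (Fin 2)) \ (f (i - 1, j) ∪ f (i + 1, j))
        ⊆ f (i, j - 1) ∪ f (i, j + 1) := by
      intro c hc
      rw [Finset.mem_sdiff] at hc
      obtain ⟨u, hadj, hcu⟩ := hf (i, j) h c
      rw [boxProd_adj] at hadj
      rcases hadj with ⟨ha, he⟩ | ⟨ha, he⟩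
      · rcases nbr_cases ha with h1 | h1
        · exfalso; apply hc.2; apply Finset.mem_union_left
          have : u = (i - 1, j) := Prod.ext h1 he.symm
          rwa [← this]
        · exfalso; apply hc.2; apply Finset.mem_union_right
          have : u = (i + 1, j) := Prod.ext h1 he.symm
          rwa [← this]
      · rcases nbr_cases ha with h1 | h1
        · apply Finset.mem_union_left
          have : u = (i, j - 1) := Prod.ext he.symm h1
          rwa [← this]
        · apply Finset.mem_union_right
          have : u = (i, j + 1) := Prod.ext he.symm h1
          rwa [← this]
    calc ((univ : Finset (Fin 2)) \ (f (i - 1, j) ∪ f (i + 1, j))).card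
        ≤ (f (i, j - 1) ∪ f (i, j + 1)).card := Finset.card_le_card hsub
      _ ≤ (f (i, j - 1)).card + (f (i, j + 1)).card := Finset.card_union_le _ _
  · rw [if_neg h]; exact Nat.zero_le _

private lemma shift_sum (j : Fin (N+3)) (d : Fin (M+3)) :
    ∑ i : Fin (M+3), (f (i + d, j)).card = colw f j := by
  unfold colw
  exact Fintype.sum_equiv (Equiv.addRight d) _ _ (fun i => rfl)

private lemma C2 (j : Fin (N+3)) : 2*(M+3) ≤ coln f j + 4 * colw f j := by
  have key : ∀ i : Fin (M+3), 2 ≤ cneed f (i,j) + (2 * (f (i,j)).card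
      + ((f (i + (-1), j)).card + (f (i + 1, j)).card)) := by
    intro i
    unfold cneed
    dsimp only
    by_cases h : f (i, j) = ∅
    · rw [if_pos h]
      have h1 : (univ : Finset (Fin 2)).card ≤
          ((univ : Finset (Fin 2)) \ (f (i - 1, j) ∪ f (i + 1, j))).card
            + (f (i - 1, j) ∪ f (i + 1, j)).card := Finset.card_le_card_sdiff_add_card
      have h2 : (f (i - 1, j) ∪ f (i + 1, j)).card ≤ (f (i - 1, j)).card + (f (i + 1, j)).card :=
        Finset.card_union_le _ _
      have h3 : (univ : Finset (Fin 2)).card = 2 := by simp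
      have h4 : i + (-1) = i - 1 := by abel
      rw [h4]
      omega
    · rw [if_neg h]
      have : 0 < (f (i,j)).card := Finset.card_pos.2 (Finset.nonempty_iff_ne_empty.2 h)
      omega
  have hsum := Finset.sum_le_sum (fun i (_ : i ∈ (univ : Finset (Fin (M+3)))) => key i)
  simp only [Finset.sum_const, Finset.card_univ, Fintype.card_fin, smul_eq_mul] at hsum
  rw [Finset.sum_add_distrib, Finset.sum_add_distrib, Finset.sum_add_distrib] at hsum
  rw [← Finset.mul_sum] at hsum
  rw [shift_sum, shift_sum] at hsum
  unfold coln colw at *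
  omega

private lemma C2' (j : Fin (N+3)) : coln f j + colw f j ≤ 2*(M+3) := by
  have key : ∀ i : Fin (M+3), cneed f (i,j) + (f (i,j)).card ≤ 2 := by
    intro i
    unfold cneed
    dsimp only
    by_cases h : f (i, j) = ∅
    · rw [if_pos h, h]
      simp only [Finset.card_empty, add_zero]
      calc ((univ : Finset (Fin 2)) \ _).card ≤ (univ : Finset (Fin 2)).card :=
            Finset.card_le_card (Finset.sdiff_subset)
        _ = 2 := by simp
    · rw [if_neg h, zero_add]
      calc (f (i,j)).card ≤ (univ : Finset (Fin 2)).card :=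
            Finset.card_le_card (Finset.subset_univ _)
        _ = 2 := by simp
  have hsum := Finset.sum_le_sum (fun i (_ : i ∈ (univ : Finset (Fin (M+3)))) => key i)
  simp only [Finset.sum_const, Finset.card_univ, Fintype.card_fin, smul_eq_mul] at hsum
  rw [Finset.sum_add_distrib] at hsum
  unfold coln colw
  omega

/-- The core counting bound: any 2-rainbow dominating function of the torus
`C_{M+3} □ C_{N+3}` has weight at least `((4(M+3)+2ℓ)/12)·(N+3)`. -/
private lemma core (k l : ℕ) (hkl : M+3 = 3*k+l) (hl : l < 3)
    (hf : IsRainbowDominating (cycleGraph (M+3) □ cycleGraph (N+3)) 2 f) :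
    (4*(M+3) + 2*l) * (N+3) ≤ 12 * ∑ v, (f v).card := by
  set km : ℤ := (k : ℤ) with hkm
  set lm : ℤ := (l : ℤ) with hlm
  have hm : ((M:ℤ)+3) = 3*km+lm := by omega
  set g : Fin (N+3) → ℤ := fun j => gam (3*km+lm) (2*km+lm) (colw f j) (coln f j) with hg
  have percol : ∀ j : Fin (N+3),
      g (j-1) + g (j+1) + 4*(3*km+lm) + 2*lm
        ≤ 2 * g j + 8*(colw f j : ℤ) + 2*(colw f (j-1) : ℤ) + 2*(colw f (j+1) : ℤ) := by
    intro j
    apply T1 km lm _ _ _ _ _ _ (by positivity) (by omega) (by positivity) (by positivity)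
      (by positivity) (by positivity) (by positivity) (by positivity)
    · exact_mod_cast C1 f hf j
    · have := C2 f (j-1); rw [← hm]; push_cast; push_cast at this; linarith
    · have := C2 f (j+1); rw [← hm]; push_cast; push_cast at this; linarith
    · have := C2 f j; rw [← hm]; push_cast; push_cast at this; linarith
    · have := C2' f (j-1); rw [← hm]; push_cast; push_cast at this; linarith
    · have := C2' f (j+1); rw [← hm]; push_cast; push_cast at this; linarith
    · have := C2' f j; rw [← hm]; push_cast; push_cast at this; linarith
  have hsum := Finset.sum_le_sum (fun j (_ : j ∈ (univ : Finset (Fin (N+3)))) => percol j)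
  have e1 : ∑ j : Fin (N+3), g (j-1) = ∑ j, g j :=
    Fintype.sum_equiv (Equiv.subRight 1) _ _ (fun j => rfl)
  have e2 : ∑ j : Fin (N+3), g (j+1) = ∑ j, g j :=
    Fintype.sum_equiv (Equiv.addRight 1) _ _ (fun j => rfl)
  have e3 : ∑ j : Fin (N+3), (colw f (j-1) : ℤ) = ∑ j, (colw f j : ℤ) :=
    Fintype.sum_equiv (Equiv.subRight 1) _ _ (fun j => rfl)
  have e4 : ∑ j : Fin (N+3), (colw f (j+1) : ℤ) = ∑ j, (colw f j : ℤ) :=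
    Fintype.sum_equiv (Equiv.addRight 1) _ _ (fun j => rfl)
  simp only [Finset.sum_add_distrib, Finset.sum_const, Finset.card_univ, Fintype.card_fin,
    smul_eq_mul, nsmul_eq_mul, ← Finset.mul_sum, e1, e2, e3, e4] at hsum
  push_cast at hsum
  have hW : ∑ j, (colw f j : ℤ) = (∑ v, (f v).card : ℕ) := by
    push_cast
    unfold colw
    push_cast
    rw [← Finset.sum_product']
    apply Finset.sum_nbij' (fun p => (p.2, p.1)) (fun p => (p.2, p.1)) <;> simp
  rw [hW] at hsum
  have : ((4*(M+3) + 2*l) * (N+3) : ℤ) ≤ (12 * ∑ v, (f v).card : ℕ) := by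
    push_cast
    push_cast at hsum
    rw [hm]
    push_cast
    linarith
  exact_mod_cast this

end core
end TwoRainbowAux

theorem two_rainbow_dom_cycles_lower (m n k ℓ : ℕ) (hm : 3 ≤ m) (hn : 3 ≤ n)
    (hkl : m = 3 * k + ℓ) (hℓ : ℓ < 3) :
    (k : ℚ) * n + (ℓ : ℚ) * n / 2 ≤ rainbowDomNum (cycleGraph m □ cycleGraph n) 2 ∧
      (k : ℚ) * n + (ℓ : ℚ) * n / 2 = (m : ℚ) * n / 3 + (ℓ : ℚ) * n / 6 := by
  constructor
  · obtain ⟨M, rfl⟩ : ∃ M, m = M + 3 := ⟨m - 3, by omega⟩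
    obtain ⟨N, rfl⟩ : ∃ N, n = N + 3 := ⟨n - 3, by omega⟩
    have hne : {w | ∃ f : (Fin (M+3) × Fin (N+3)) → Finset (Fin 2),
        IsRainbowDominating (cycleGraph (M+3) □ cycleGraph (N+3)) 2 f
          ∧ w = ∑ v, (f v).card}.Nonempty := by
      refine ⟨∑ v : Fin (M+3) × Fin (N+3), (univ : Finset (Fin 2)).card,
        fun _ => univ, ?_, rfl⟩
      intro v hv c
      exact absurd hv (Finset.univ_nonempty.ne_empty)
    have hmem := Nat.sInf_mem hne
    obtain ⟨f, hf, heq⟩ := hmem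
    have hcore := TwoRainbowAux.core f k ℓ hkl hℓ hf
    have heq' : rainbowDomNum (cycleGraph (M+3) □ cycleGraph (N+3)) 2 = ∑ v, (f v).card := by
      unfold rainbowDomNum
      exact heq
    rw [heq']
    have hineq : ((4*(M+3) + 2*ℓ) * (N+3) : ℚ) ≤ (12 * ∑ v, (f v).card : ℕ) := by
      exact_mod_cast hcore
    have hsub : (M : ℚ) + 3 = 3*(k:ℚ) + ℓ := by exact_mod_cast congrArg (Nat.cast (R := ℚ)) hkl
    push_cast at hineq ⊢
    nlinarith [hineq, hsub]
  · have : (m : ℚ) = 3*(k:ℚ) + ℓ := by exact_mod_cast congrArg (Nat.cast (R := ℚ)) hkl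
    rw [this]
    ring
end

section
/- Let m ≡ 2 (mod 3) with m = 3k + 2, m ≥ 5, and let n ≡ 0 (mod 6), n ≥ 6. Then γ_{r2}(C_m □ C_n) ≤ k·n + n. -/
open SimpleGraph Finset

/-- Adjacency of consecutive vertices in a cycle. -/
lemma cycle_adj_succ {q : ℕ} (hq : 2 ≤ q) {a b : Fin q}
    (h : b.val = a.val + 1 ∨ (a.val + 1 = q ∧ b.val = 0)) :
    (cycleGraph q).Adj a b := by
  rw [cycleGraph_adj']
  right
  rw [Fin.sub_def]
  have ha := a.isLt
  have hb := b.isLt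
  simp only
  rcases h with h | ⟨h1, h2⟩
  · have : q - a.val + b.val = q + 1 := by omega
    rw [this, Nat.add_mod_left]
    exact Nat.mod_eq_of_lt (by omega)
  · have : q - a.val + b.val = 1 := by omega
    rw [this]
    exact Nat.mod_eq_of_lt (by omega)

lemma cycle_adj_nat {q : ℕ} (hq : 2 ≤ q) {x x' : ℕ} (hx : x < q) (hx' : x' < q)
    (h : x' = x + 1 ∨ x = x' + 1 ∨ (x + 1 = q ∧ x' = 0) ∨ (x' + 1 = q ∧ x = 0)) :
    (cycleGraph q).Adj ⟨x, hx⟩ ⟨x', hx'⟩ := by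
  rcases h with h | h | h | h
  · exact cycle_adj_succ hq (Or.inl h)
  · exact (cycle_adj_succ hq (Or.inl h)).symm
  · exact cycle_adj_succ hq (Or.inr h)
  · exact (cycle_adj_succ hq (Or.inr h)).symm

/-- The 2-rainbow dominating labeling of `C_m □ C_n` for `m = 3k+2`. -/
def rdF (k m n : ℕ) (v : Fin m × Fin n) : Finset (Fin 2) :=
  if (v.1.val ≤ 3 * k ∧ (v.1.val + v.2.val) % 3 = 0) ∨
      (v.1.val = 3 * k + 1 ∧ ¬ v.2.val % 3 = 0) then
    (if v.2.val % 2 = 0 then {0} else {1}) else ∅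

lemma mem_rdF {k m n : ℕ} {x y : ℕ} (hx : x < m) (hy : y < n) (c : Fin 2)
    (h : (x ≤ 3 * k ∧ (x + y) % 3 = 0) ∨ (x = 3 * k + 1 ∧ ¬ y % 3 = 0))
    (hc : c.val = y % 2) : c ∈ rdF k m n (⟨x, hx⟩, ⟨y, hy⟩) := by
  have h' : ((⟨x, hx⟩ : Fin m), (⟨y, hy⟩ : Fin n)).1.val ≤ 3 * k ∧
      (((⟨x, hx⟩ : Fin m), (⟨y, hy⟩ : Fin n)).1.val +
        ((⟨x, hx⟩ : Fin m), (⟨y, hy⟩ : Fin n)).2.val) % 3 = 0 ∨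
      ((⟨x, hx⟩ : Fin m), (⟨y, hy⟩ : Fin n)).1.val = 3 * k + 1 ∧
        ¬ ((⟨x, hx⟩ : Fin m), (⟨y, hy⟩ : Fin n)).2.val % 3 = 0 := h
  rw [rdF, if_pos h']
  rcases Nat.mod_two_eq_zero_or_one y with hp | hp
  · rw [if_pos hp, Finset.mem_singleton, Fin.ext_iff]
    simp only [Fin.val_zero]
    omega
  · rw [if_neg (by simp only []; omega), Finset.mem_singleton, Fin.ext_iff]
    simp only [Fin.val_one]
    omega

lemma rdF_dominating (k m n : ℕ) (hmk : m = 3 * k + 2) (hn : 6 ≤ n) (hn6 : n % 6 = 0) :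
    IsRainbowDominating (cycleGraph m □ cycleGraph n) 2 (rdF k m n) := by
  intro v hv c
  have hm2 : 2 ≤ m := by omega
  have hn2 : 2 ≤ n := by omega
  have h3n : n % 3 = 0 := by omega
  have h2n : n % 2 = 0 := by omega
  obtain ⟨i, j⟩ := v
  have hi := i.isLt
  have hj := j.isLt
  have hcv := c.isLt
  have hnc : ¬ ((i.val ≤ 3 * k ∧ (i.val + j.val) % 3 = 0) ∨
      (i.val = 3 * k + 1 ∧ ¬ j.val % 3 = 0)) := by
    intro h
    rw [rdF, if_pos h] at hv
    split_ifs at hv <;> exact absurd hv (Finset.singleton_ne_empty _)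
  push_neg at hnc
  obtain ⟨h1, h2⟩ := hnc
  have hkey : (i.val ≤ 3 * k ∧ (i.val + j.val) % 3 ≠ 0) ∨
      (i.val = 3 * k + 1 ∧ j.val % 3 = 0) := by
    by_cases ha : i.val ≤ 3 * k
    · exact Or.inl ⟨ha, h1 ha⟩
    · have hi1 : i.val = 3 * k + 1 := by omega
      exact Or.inr ⟨hi1, h2 hi1⟩
  clear h1 h2 hv
  -- replace i, j by their mk forms
  have hieta : i = ⟨i.val, hi⟩ := rfl
  have hjeta : j = ⟨j.val, hj⟩ := rfl
  by_cases hc : c.val = j.val % 2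
  · -- vertical witness
    by_cases hr1 : (i.val + j.val) % 3 = 1
    · -- predecessor row (with wraparound)
      rcases Nat.eq_zero_or_pos i.val with ha0 | hapos
      · refine ⟨(⟨m - 1, by omega⟩, j), ?_, ?_⟩
        · exact SimpleGraph.boxProd_adj_left.mpr (cycle_adj_nat hm2 _ _ (by omega))
        · exact mem_rdF _ _ c (by omega) hc
      · refine ⟨(⟨i.val - 1, by omega⟩, j), ?_, ?_⟩
        · exact SimpleGraph.boxProd_adj_left.mpr (cycle_adj_nat hm2 _ _ (by omega))
        · exact mem_rdF _ _ c (by omega) hc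
    · -- successor row, here (i+j)%3 = 2 and i ≤ 3k
      have hr2 : (i.val + j.val) % 3 = 2 ∧ i.val ≤ 3 * k := by omega
      refine ⟨(⟨i.val + 1, by omega⟩, j), ?_, ?_⟩
      · exact SimpleGraph.boxProd_adj_left.mpr (cycle_adj_nat hm2 _ _ (by omega))
      · exact mem_rdF _ _ c (by omega) hc
  · -- horizontal witness
    by_cases hr1 : (i.val + j.val) % 3 = 1
    · rcases Nat.eq_zero_or_pos j.val with hb0 | hbpos
      · refine ⟨(i, ⟨n - 1, by omega⟩), ?_, ?_⟩
        · exact SimpleGraph.boxProd_adj_right.mpr (cycle_adj_nat hn2 _ _ (by omega))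
        · exact mem_rdF _ _ c (by omega) (by omega)
      · refine ⟨(i, ⟨j.val - 1, by omega⟩), ?_, ?_⟩
        · exact SimpleGraph.boxProd_adj_right.mpr (cycle_adj_nat hn2 _ _ (by omega))
        · exact mem_rdF _ _ c (by omega) (by omega)
    · have hr2 : (i.val + j.val) % 3 = 2 ∧ i.val ≤ 3 * k := by omega
      rcases Nat.lt_or_ge (j.val + 1) n with hb1 | hb1
      · refine ⟨(i, ⟨j.val + 1, hb1⟩), ?_, ?_⟩
        · exact SimpleGraph.boxProd_adj_right.mpr (cycle_adj_nat hn2 _ _ (by omega))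
        · exact mem_rdF _ _ c (by omega) (by omega)
      · refine ⟨(i, ⟨0, by omega⟩), ?_, ?_⟩
        · exact SimpleGraph.boxProd_adj_right.mpr (cycle_adj_nat hn2 _ _ (by omega))
        · exact mem_rdF _ _ c (by omega) (by omega)

theorem two_rainbow_dom_cycles_upper_mod2 (m n k : ℕ) (hm : 5 ≤ m) (hmk : m = 3 * k + 2)
    (hn : 6 ≤ n) (hn6 : n % 6 = 0) :
    rainbowDomNum (cycleGraph m □ cycleGraph n) 2 ≤ k * n + n := by
  have hdom := rdF_dominating k m n hmk hn hn6
  have hmem : (∑ v, (rdF k m n v).card) ∈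
      {w | ∃ f : Fin m × Fin n → Finset (Fin 2),
        IsRainbowDominating (cycleGraph m □ cycleGraph n) 2 f ∧ w = ∑ v, (f v).card} :=
    ⟨rdF k m n, hdom, rfl⟩
  refine le_trans (Nat.sInf_le hmem) ?_
  have hcard : ∀ v : Fin m × Fin n, (rdF k m n v).card =
      if (v.1.val ≤ 3 * k ∧ (v.1.val + v.2.val) % 3 = 0) ∨
        (v.1.val = 3 * k + 1 ∧ ¬ v.2.val % 3 = 0) then 1 else 0 := by
    intro v
    rw [rdF]
    split_ifs <;> simp
  have hcount : ∀ j : Fin n, (∑ i : Fin m, (rdF k m n (i, j)).card) ≤ k + 1 := by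
    intro j
    have hj := j.isLt
    calc ∑ i : Fin m, (rdF k m n (i, j)).card
        = ∑ i : Fin m, (if (i.val ≤ 3 * k ∧ (i.val + j.val) % 3 = 0) ∨
            (i.val = 3 * k + 1 ∧ ¬ j.val % 3 = 0) then 1 else 0) :=
          Finset.sum_congr rfl (fun i _ => hcard (i, j))
      _ = (Finset.univ.filter (fun i : Fin m =>
            (i.val ≤ 3 * k ∧ (i.val + j.val) % 3 = 0) ∨
            (i.val = 3 * k + 1 ∧ ¬ j.val % 3 = 0))).card := by
          rw [Finset.sum_boole]; simp
      _ ≤ (Finset.range (k + 1)).card := ?_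
      _ = k + 1 := by simp
    refine Finset.card_le_card_of_injOn (fun i => i.val / 3) ?_ ?_
    · intro a ha
      rw [Finset.mem_coe, Finset.mem_filter] at ha
      rw [Finset.mem_coe, Finset.mem_range]
      show a.val / 3 < k + 1
      obtain ⟨-, ha⟩ := ha
      omega
    · intro a ha b hb hab
      simp only [Finset.coe_filter, Set.mem_setOf_eq] at ha hb
      obtain ⟨-, ha⟩ := ha
      obtain ⟨-, hb⟩ := hb
      have hab' : a.val / 3 = b.val / 3 := hab
      have : a.val = b.val := by omega
      exact Fin.ext this
  calc ∑ v : Fin m × Fin n, (rdF k m n v).card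
      = ∑ i : Fin m, ∑ j : Fin n, (rdF k m n (i, j)).card := Fintype.sum_prod_type _
    _ = ∑ j : Fin n, ∑ i : Fin m, (rdF k m n (i, j)).card := Finset.sum_comm
    _ ≤ ∑ _j : Fin n, (k + 1) := Finset.sum_le_sum (fun j _ => hcount j)
    _ = k * n + n := by
        rw [Finset.sum_const, Finset.card_univ, Fintype.card_fin, smul_eq_mul]
        ring
end

section
/- Let m ≡ 1 (mod 3) with m = 3k + 1, m ≥ 4, and let n ≡ 0 (mod 6), n ≥ 6. Then γ_{r2}(C_m □ C_n) ≤ k·n + n. -/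
open SimpleGraph Finset

/-- The explicit 2-rainbow dominating function on `C_m □ C_n` for `m = 3k+1`. -/
def rdFun (m n k : ℕ) (v : Fin m × Fin n) : Finset (Fin 2) :=
  if (v.1 : ℕ) < 3 * k then
    (if (v.2 : ℕ) % 3 = 2 * (v.1 : ℕ) % 3 then
      (if (v.1 : ℕ) % 2 = 0 then {0} else {1}) else ∅)
  else
    (if (v.2 : ℕ) % 3 = 1 then {1}
     else if (v.2 : ℕ) % 3 = 0 then (if k % 2 = 0 then {0} else {1}) else {0})

lemma count3 (t r : ℕ) (hr : r < 3) :
    ((Finset.range (3*t)).filter (fun j => j % 3 = r)).card = t := by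
  have h : (Finset.range (3*t)).filter (fun j => j % 3 = r)
      = (Finset.range t).image (fun q => 3*q + r) := by
    ext x
    simp only [Finset.mem_filter, Finset.mem_range, Finset.mem_image]
    constructor
    · rintro ⟨h1, h2⟩; exact ⟨x / 3, by omega, by omega⟩
    · rintro ⟨q, hq, rfl⟩; omega
  rw [h, Finset.card_image_of_injective _ (fun a b hab => by omega), Finset.card_range]

lemma cyc_adj_sub_s10 {n : ℕ} [NeZero n] (hn : 2 ≤ n) (v : Fin n) :
    (cycleGraph n).Adj v (v - 1) := by
  rw [cycleGraph_adj']
  left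
  rw [sub_sub_cancel]
  simp [Fin.val_one', Nat.mod_eq_of_lt hn]

lemma cyc_adj_add_s10 {n : ℕ} [NeZero n] (hn : 2 ≤ n) (v : Fin n) :
    (cycleGraph n).Adj v (v + 1) := by
  rw [cycleGraph_adj']
  right
  rw [add_sub_cancel_left]
  simp [Fin.val_one', Nat.mod_eq_of_lt hn]

lemma val_sub_one_s10 {n : ℕ} [NeZero n] (hn : 2 ≤ n) (v : Fin n) :
    ((v - 1 : Fin n) : ℕ) = (n - 1 + (v : ℕ)) % n := by
  rw [Fin.sub_def]
  simp [Fin.val_one', Nat.mod_eq_of_lt hn]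

lemma val_add_one_s10 {n : ℕ} [NeZero n] (hn : 2 ≤ n) (v : Fin n) :
    ((v + 1 : Fin n) : ℕ) = ((v : ℕ) + 1) % n := by
  rw [Fin.add_def]
  simp [Fin.val_one', Nat.mod_eq_of_lt hn]

theorem two_rainbow_dom_cycles_upper_mod1 (m n k : ℕ) (hm : 4 ≤ m) (hmk : m = 3 * k + 1)
    (hn : 6 ≤ n) (hn6 : n % 6 = 0) :
    rainbowDomNum (cycleGraph m □ cycleGraph n) 2 ≤ k * n + n := by
  haveI : NeZero m := ⟨by omega⟩
  haveI : NeZero n := ⟨by omega⟩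
  have hm2 : 2 ≤ m := by omega
  have hn2 : 2 ≤ n := by omega
  have hk1 : 1 ≤ k := by omega
  -- weight computation
  have hsum : ∑ v : Fin m × Fin n, (rdFun m n k v).card = k * n + n := by
    rw [Fintype.sum_prod_type]
    have hrow : ∀ i : Fin m, ∑ j : Fin n, (rdFun m n k (i, j)).card
        = if (i : ℕ) < 3 * k then n / 3 else n := by
      intro i
      by_cases hi : (i : ℕ) < 3 * k
      · rw [if_pos hi]
        have hc : ∀ j : Fin n, (rdFun m n k (i, j)).card
            = if (j : ℕ) % 3 = 2 * (i : ℕ) % 3 then 1 else 0 := by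
          intro j
          simp only [rdFun, if_pos hi]
          split_ifs <;> simp
        rw [Finset.sum_congr rfl (fun j _ => hc j)]
        rw [Fin.sum_univ_eq_sum_range (fun j => if j % 3 = 2 * (i : ℕ) % 3 then 1 else 0) n]
        rw [← Finset.card_filter]
        have hn3 : 3 * (n / 3) = n := by omega
        have h := count3 (n / 3) (2 * (i : ℕ) % 3) (by omega)
        rw [hn3] at h
        exact h
      · rw [if_neg hi]
        have hc : ∀ j : Fin n, (rdFun m n k (i, j)).card = 1 := by
          intro j
          simp only [rdFun, if_neg hi]
          split_ifs <;> simp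
        rw [Finset.sum_congr rfl (fun j _ => hc j)]
        simp
    rw [Finset.sum_congr rfl (fun i _ => hrow i)]
    rw [Fin.sum_univ_eq_sum_range (fun x => if x < 3 * k then n / 3 else n) m]
    rw [hmk, Finset.sum_range_succ, if_neg (lt_irrefl _)]
    rw [Finset.sum_congr rfl (fun x hx => if_pos (Finset.mem_range.mp hx))]
    rw [Finset.sum_const, Finset.card_range, smul_eq_mul]
    obtain ⟨t, ht⟩ : 3 ∣ n := by omega
    subst ht
    rw [Nat.mul_div_cancel_left t (by norm_num)]
    ring
  -- domination
  have hdom : IsRainbowDominating (cycleGraph m □ cycleGraph n) 2 (rdFun m n k) := by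
    intro v hv c
    obtain ⟨a, b⟩ := v
    have him : (a : ℕ) < m := a.isLt
    have hjn : (b : ℕ) < n := b.isLt
    -- extract the conditions from emptiness
    have hi : (a : ℕ) < 3 * k := by
      by_contra hc
      simp only [rdFun, if_neg hc] at hv
      split_ifs at hv <;> simp at hv
    have hj : ¬ ((b : ℕ) % 3 = 2 * (a : ℕ) % 3) := by
      intro hc
      simp only [rdFun, if_pos hi, if_pos hc] at hv
      split_ifs at hv <;> simp at hv
    -- adjacency facts
    have adjL : (cycleGraph m □ cycleGraph n).Adj (a, b) (a, b - 1) :=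
      boxProd_adj.mpr (Or.inr ⟨cyc_adj_sub_s10 hn2 b, rfl⟩)
    have adjR : (cycleGraph m □ cycleGraph n).Adj (a, b) (a, b + 1) :=
      boxProd_adj.mpr (Or.inr ⟨cyc_adj_add_s10 hn2 b, rfl⟩)
    have adjU : (cycleGraph m □ cycleGraph n).Adj (a, b) (a - 1, b) :=
      boxProd_adj.mpr (Or.inl ⟨cyc_adj_sub_s10 hm2 a, rfl⟩)
    have adjD : (cycleGraph m □ cycleGraph n).Adj (a, b) (a + 1, b) :=
      boxProd_adj.mpr (Or.inl ⟨cyc_adj_add_s10 hm2 a, rfl⟩)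
    -- column value facts mod 3
    have hL3 : ((b - 1 : Fin n) : ℕ) % 3 = ((b : ℕ) + 2) % 3 := by
      rw [val_sub_one_s10 hn2, Nat.mod_mod_of_dvd _ (show 3 ∣ n by omega)]
      omega
    have hR3 : ((b + 1 : Fin n) : ℕ) % 3 = ((b : ℕ) + 1) % 3 := by
      rw [val_add_one_s10 hn2, Nat.mod_mod_of_dvd _ (show 3 ∣ n by omega)]
    -- row value facts
    have hU0 : (a : ℕ) = 0 → ((a - 1 : Fin m) : ℕ) = 3 * k := by
      intro h0
      rw [val_sub_one_s10 hm2, h0, Nat.add_zero, Nat.mod_eq_of_lt (by omega)]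
      omega
    have hU1 : (a : ℕ) ≠ 0 → ((a - 1 : Fin m) : ℕ) = (a : ℕ) - 1 := by
      intro h0
      rw [val_sub_one_s10 hm2]
      have he : m - 1 + (a : ℕ) = m + ((a : ℕ) - 1) := by omega
      rw [he, Nat.add_mod_left, Nat.mod_eq_of_lt (by omega)]
    have hD : ((a + 1 : Fin m) : ℕ) = (a : ℕ) + 1 := by
      rw [val_add_one_s10 hm2, Nat.mod_eq_of_lt (by omega)]
    -- two cases for the column residue
    have hcase : (b : ℕ) % 3 = (2 * (a : ℕ) + 1) % 3 ∨ (b : ℕ) % 3 = (2 * (a : ℕ) + 2) % 3 := by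
      have ha3 : (a : ℕ) % 3 = 0 ∨ (a : ℕ) % 3 = 1 ∨ (a : ℕ) % 3 = 2 := by omega
      have hb3 : (b : ℕ) % 3 = 0 ∨ (b : ℕ) % 3 = 1 ∨ (b : ℕ) % 3 = 2 := by omega
      rcases ha3 with h|h|h <;> rcases hb3 with h'|h'|h' <;>
        first | (left; omega) | (right; omega)
    -- one neighbor colored like row a, one colored opposite
    have h1 : ∃ u, (cycleGraph m □ cycleGraph n).Adj (a, b) u ∧
        rdFun m n k u = (if (a : ℕ) % 2 = 0 then ({0} : Finset (Fin 2)) else {1}) := by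
      rcases hcase with hA | hB
      · refine ⟨(a, b - 1), adjL, ?_⟩
        have hc : ((b - 1 : Fin n) : ℕ) % 3 = 2 * (a : ℕ) % 3 := by rw [hL3]; omega
        simp only [rdFun]
        rw [if_pos hi, if_pos hc]
      · refine ⟨(a, b + 1), adjR, ?_⟩
        have hc : ((b + 1 : Fin n) : ℕ) % 3 = 2 * (a : ℕ) % 3 := by rw [hR3]; omega
        simp only [rdFun]
        rw [if_pos hi, if_pos hc]
    have h2 : ∃ u, (cycleGraph m □ cycleGraph n).Adj (a, b) u ∧
        rdFun m n k u = (if (a : ℕ) % 2 = 0 then ({1} : Finset (Fin 2)) else {0}) := by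
      rcases hcase with hA | hB
      · refine ⟨(a - 1, b), adjU, ?_⟩
        by_cases h0 : (a : ℕ) = 0
        · have hu1 := hU0 h0
          have hj1 : (b : ℕ) % 3 = 1 := by omega
          simp only [rdFun]
          rw [hu1, if_neg (lt_irrefl _), if_pos hj1, if_pos (by omega : (a : ℕ) % 2 = 0)]
        · have hu1 := hU1 h0
          have hj1 : (b : ℕ) % 3 = 2 * ((a : ℕ) - 1) % 3 := by omega
          simp only [rdFun]
          rw [hu1, if_pos (by omega), if_pos hj1]
          by_cases hp : (a : ℕ) % 2 = 0
          · rw [if_neg (by omega), if_pos hp]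
          · rw [if_pos (by omega), if_neg hp]
      · refine ⟨(a + 1, b), adjD, ?_⟩
        by_cases h0 : (a : ℕ) + 1 = 3 * k
        · have hj0 : (b : ℕ) % 3 = 0 := by omega
          simp only [rdFun]
          rw [hD, if_neg (by omega), if_neg (by omega), if_pos hj0]
          by_cases hp : (a : ℕ) % 2 = 0
          · rw [if_neg (by omega), if_pos hp]
          · rw [if_pos (by omega), if_neg hp]
        · have hj1 : (b : ℕ) % 3 = 2 * ((a : ℕ) + 1) % 3 := by omega
          simp only [rdFun]
          rw [hD, if_pos (by omega), if_pos hj1]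
          by_cases hp : (a : ℕ) % 2 = 0
          · rw [if_neg (by omega), if_pos hp]
          · rw [if_pos (by omega), if_neg hp]
    obtain ⟨u1, a1, e1⟩ := h1
    obtain ⟨u2, a2, e2⟩ := h2
    by_cases hp : (a : ℕ) % 2 = 0
    · rw [if_pos hp] at e1 e2
      fin_cases c
      · exact ⟨u1, a1, by rw [e1]; simp⟩
      · exact ⟨u2, a2, by rw [e2]; simp⟩
    · rw [if_neg hp] at e1 e2
      fin_cases c
      · exact ⟨u2, a2, by rw [e2]; simp⟩
      · exact ⟨u1, a1, by rw [e1]; simp⟩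
  exact Nat.sInf_le ⟨rdFun m n k, hdom, hsum.symm⟩
end

section
/- Let n ≡ 0 (mod 6), n ≥ 6, and m ≥ 3. Then γ_{r2}(C_m □ C_n) ≤ ⌈m/3⌉·n. -/
open SimpleGraph Finset

lemma myval_one {N : ℕ} (h : 2 ≤ N) [NeZero N] : ((1 : Fin N)).val = 1 := by
  rw [Fin.val_one', Nat.mod_eq_of_lt h]

lemma myadj_succ {N : ℕ} (h : 2 ≤ N) [NeZero N] (u : Fin N) : (cycleGraph N).Adj u (u + 1) := by
  rw [cycleGraph_adj']
  right
  rw [add_sub_cancel_left, myval_one h]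

lemma myadj_pred {N : ℕ} (h : 2 ≤ N) [NeZero N] (u : Fin N) : (cycleGraph N).Adj u (u - 1) := by
  rw [cycleGraph_adj']
  left
  rw [sub_sub_cancel, myval_one h]

lemma myval_add_one {N : ℕ} (h : 2 ≤ N) [NeZero N] (u : Fin N) :
    (u + 1).val = if u.val = N - 1 then 0 else u.val + 1 := by
  have hu := u.isLt
  rw [Fin.val_add, myval_one h]
  split
  · rename_i h0
    have : u.val + 1 = N := by omega
    rw [this, Nat.mod_self]
  · exact Nat.mod_eq_of_lt (by omega)

lemma myval_sub_one {N : ℕ} (h : 2 ≤ N) [NeZero N] (u : Fin N) :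
    (u - 1).val = if u.val = 0 then N - 1 else u.val - 1 := by
  have hu := u.isLt
  have key : (u - 1).val = (N - 1 + u.val) % N := by rw [Fin.sub_def]; rw [myval_one h]
  rw [key]
  split
  · rename_i h0; rw [h0, Nat.add_zero]; exact Nat.mod_eq_of_lt (by omega)
  · rename_i h0
    have : N - 1 + u.val = N + (u.val - 1) := by omega
    rw [this, Nat.add_mod_left]
    exact Nat.mod_eq_of_lt (by omega)

/-- the pattern of nonempty cells -/
def patB (m i j : ℕ) : Bool :=
  if i < m - m % 3 then decide (i % 3 = j % 3)
  else if m % 3 = 1 then true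
  else if i = m - m % 3 then decide (j % 3 = 0)
  else decide (j % 3 ≠ 0)

lemma patB_iff (m i j : ℕ) (hi : i < m) : patB m i j = true ↔
    (i < m - m % 3 ∧ i % 3 = j % 3) ∨
    (m - m % 3 ≤ i ∧ m % 3 = 1) ∨
    (i = m - m % 3 ∧ m % 3 = 2 ∧ j % 3 = 0) ∨
    (m - m % 3 < i ∧ m % 3 = 2 ∧ j % 3 ≠ 0) := by
  unfold patB
  by_cases h1 : i < m - m % 3 <;> by_cases h2 : m % 3 = 1 <;> by_cases h3 : i = m - m % 3 <;>
    simp [h1, h2, h3] <;> omega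

/-- color by column parity -/
def colF (j : ℕ) : Finset (Fin 2) := {if j % 2 = 0 then 0 else 1}

lemma mem_colF (c : Fin 2) (j : ℕ) (h : c.val = j % 2) : c ∈ colF j := by
  have := c.isLt
  unfold colF
  rcases Nat.mod_two_eq_zero_or_one j with h2 | h2 <;>
    · rw [h2] at h ⊢
      simp only [mem_singleton]
      first
      | exact Fin.ext (by simpa using h)
      | (apply Fin.ext; simpa using h)

/-- the 2-rainbow dominating function -/
def rdf (m n : ℕ) : Fin m × Fin n → Finset (Fin 2) :=
  fun p => if patB m p.1.val p.2.val then colF p.2.val else ∅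

lemma rdf_dominating (m n : ℕ) (hm : 3 ≤ m) (hn : 6 ≤ n) (hn6 : n % 6 = 0) :
    IsRainbowDominating (cycleGraph m □ cycleGraph n) 2 (rdf m n) := by
  have hm2 : 2 ≤ m := by omega
  have hn2 : 2 ≤ n := by omega
  haveI : NeZero m := ⟨by omega⟩
  haveI : NeZero n := ⟨by omega⟩
  rintro ⟨i, j⟩ hv c
  have hi := i.isLt
  have hj := j.isLt
  have hc := c.isLt
  by_cases hb : patB m i.val j.val = true
  · exfalso
    simp [rdf, hb, colF] at hv
  rw [patB_iff _ _ _ i.isLt] at hb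
  clear hv
  -- value facts for neighbors
  have hu : (i.val = 0 ∧ (i - 1).val = m - 1) ∨ (i.val ≠ 0 ∧ (i - 1).val = i.val - 1) := by
    rw [myval_sub_one hm2]
    by_cases h : i.val = 0 <;> simp [h]
  have hd : (i.val = m - 1 ∧ (i + 1).val = 0) ∨ (i.val ≠ m - 1 ∧ (i + 1).val = i.val + 1) := by
    rw [myval_add_one hm2]
    by_cases h : i.val = m - 1 <;> simp [h]
  have hl3 : (j - 1).val % 3 = (j.val + 2) % 3 := by
    rw [myval_sub_one hn2]; split <;> omega
  have hl2 : (j - 1).val % 2 = (j.val + 1) % 2 := by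
    rw [myval_sub_one hn2]; split <;> omega
  have hr3 : (j + 1).val % 3 = (j.val + 1) % 3 := by
    rw [myval_add_one hn2]; split <;> omega
  have hr2 : (j + 1).val % 2 = (j.val + 1) % 2 := by
    rw [myval_add_one hn2]; split <;> omega
  by_cases hiM : i.val < m - m % 3
  · have hne : i.val % 3 ≠ j.val % 3 := by clear hu hd hl3 hl2 hr3 hr2; omega
    clear hb
    by_cases hA1 : i.val % 3 = (j.val + 1) % 3
    · by_cases hcv : c.val = j.val % 2
      · refine ⟨(i - 1, j), boxProd_adj.mpr (Or.inl ⟨myadj_pred hm2 i, rfl⟩), ?_⟩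
        have hp : patB m (i - 1).val j.val = true := by
          rw [patB_iff _ _ _ (Fin.isLt _)]
          clear hd hl3 hl2 hr3 hr2 hcv hc
          omega
        simpa [rdf, hp] using mem_colF c j.val hcv
      · refine ⟨(i, j + 1), boxProd_adj.mpr (Or.inr ⟨myadj_succ hn2 j, rfl⟩), ?_⟩
        have hp : patB m i.val (j + 1).val = true := by
          rw [patB_iff _ _ _ i.isLt]
          clear hu hd hl3 hl2 hr2 hcv hc
          omega
        simpa [rdf, hp] using mem_colF c (j + 1).val (by clear hu hd hl3 hr3 hl2; omega)
    · have hA2 : i.val % 3 = (j.val + 2) % 3 := by clear hu hd hl3 hl2 hr3 hr2; omega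
      clear hA1
      by_cases hcv : c.val = j.val % 2
      · refine ⟨(i + 1, j), boxProd_adj.mpr (Or.inl ⟨myadj_succ hm2 i, rfl⟩), ?_⟩
        have hp : patB m (i + 1).val j.val = true := by
          rw [patB_iff _ _ _ (Fin.isLt _)]
          clear hu hl3 hl2 hr3 hr2 hcv hc
          omega
        simpa [rdf, hp] using mem_colF c j.val hcv
      · refine ⟨(i, j - 1), boxProd_adj.mpr (Or.inr ⟨myadj_pred hn2 j, rfl⟩), ?_⟩
        have hp : patB m i.val (j - 1).val = true := by
          rw [patB_iff _ _ _ i.isLt]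
          clear hu hd hr3 hl2 hr2 hcv hc
          omega
        simpa [rdf, hp] using mem_colF c (j - 1).val (by clear hu hd hl3 hr3 hr2; omega)
  · have hm32 : m % 3 = 2 := by clear hu hd hl3 hl2 hr3 hr2; omega
    by_cases hB : i.val = m - m % 3
    · have hj0 : j.val % 3 ≠ 0 := by clear hu hd hl3 hl2 hr3 hr2; omega
      clear hb
      by_cases hj1 : j.val % 3 = 1
      · by_cases hcv : c.val = j.val % 2
        · refine ⟨(i + 1, j), boxProd_adj.mpr (Or.inl ⟨myadj_succ hm2 i, rfl⟩), ?_⟩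
          have hp : patB m (i + 1).val j.val = true := by
            rw [patB_iff _ _ _ (Fin.isLt _)]
            clear hu hl3 hl2 hr3 hr2 hcv hc
            omega
          simpa [rdf, hp] using mem_colF c j.val hcv
        · refine ⟨(i, j - 1), boxProd_adj.mpr (Or.inr ⟨myadj_pred hn2 j, rfl⟩), ?_⟩
          have hp : patB m i.val (j - 1).val = true := by
            rw [patB_iff _ _ _ i.isLt]
            clear hu hd hr3 hl2 hr2 hcv hc
            omega
          simpa [rdf, hp] using mem_colF c (j - 1).val (by clear hu hd hl3 hr3 hr2; omega)
      · have hj2 : j.val % 3 = 2 := by clear hu hd hl3 hl2 hr3 hr2; omega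
        by_cases hcv : c.val = j.val % 2
        · refine ⟨(i - 1, j), boxProd_adj.mpr (Or.inl ⟨myadj_pred hm2 i, rfl⟩), ?_⟩
          have hp : patB m (i - 1).val j.val = true := by
            rw [patB_iff _ _ _ (Fin.isLt _)]
            clear hd hl3 hl2 hr3 hr2 hcv hc
            omega
          simpa [rdf, hp] using mem_colF c j.val hcv
        · refine ⟨(i, j + 1), boxProd_adj.mpr (Or.inr ⟨myadj_succ hn2 j, rfl⟩), ?_⟩
          have hp : patB m i.val (j + 1).val = true := by
            rw [patB_iff _ _ _ i.isLt]
            clear hu hd hl3 hl2 hr2 hcv hc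
            omega
          simpa [rdf, hp] using mem_colF c (j + 1).val (by clear hu hd hl3 hr3 hl2; omega)
    · have hieq : i.val = m - 1 := by clear hu hd hl3 hl2 hr3 hr2; omega
      have hj0 : j.val % 3 = 0 := by clear hu hd hl3 hl2 hr3 hr2; omega
      clear hb
      by_cases hcv : c.val = j.val % 2
      · refine ⟨(i + 1, j), boxProd_adj.mpr (Or.inl ⟨myadj_succ hm2 i, rfl⟩), ?_⟩
        have hp : patB m (i + 1).val j.val = true := by
          rw [patB_iff _ _ _ (Fin.isLt _)]
          clear hu hl3 hl2 hr3 hr2 hcv hc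
          omega
        simpa [rdf, hp] using mem_colF c j.val hcv
      · refine ⟨(i, j - 1), boxProd_adj.mpr (Or.inr ⟨myadj_pred hn2 j, rfl⟩), ?_⟩
        have hp : patB m i.val (j - 1).val = true := by
          rw [patB_iff _ _ _ i.isLt]
          clear hu hd hr3 hl2 hr2 hcv hc
          omega
        simpa [rdf, hp] using mem_colF c (j - 1).val (by clear hu hd hl3 hr3 hr2; omega)

lemma row_count_le (n t : ℕ) (hn6 : n % 6 = 0) (hn : 6 ≤ n) :
    ((univ : Finset (Fin n)).filter (fun j => j.val % 3 = t)).card ≤ n / 3 := by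
  classical
  rcases Nat.lt_or_ge t 3 with ht | ht
  · have : ((univ : Finset (Fin n)).filter (fun j => j.val % 3 = t)).card ≤ (range (n / 3)).card := by
      apply Finset.card_le_card_of_injOn (fun j => j.val / 3)
      · intro a ha
        simp only [mem_coe, mem_filter, mem_univ, true_and] at ha
        have := a.isLt
        simp only [mem_coe, mem_range]
        omega
      · intro a ha b hb hab
        simp only [coe_filter, Set.mem_setOf_eq] at ha hb
        have ha' := ha.2; have hb' := hb.2
        have hab' : a.val / 3 = b.val / 3 := hab
        apply Fin.ext
        omega
    simpa using this
  · have : ((univ : Finset (Fin n)).filter (fun j => j.val % 3 = t)) = ∅ := by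
      apply Finset.filter_false_of_mem
      intro a _
      have : a.val % 3 < 3 := Nat.mod_lt _ (by omega)
      omega
    simp [this]

lemma row_count_ne (n : ℕ) (hn6 : n % 6 = 0) (hn : 6 ≤ n) :
    ((univ : Finset (Fin n)).filter (fun j => j.val % 3 ≠ 0)).card ≤ 2 * (n / 3) := by
  classical
  have : ((univ : Finset (Fin n)).filter (fun j => j.val % 3 ≠ 0)).card ≤ (range (2 * (n / 3))).card := by
    apply Finset.card_le_card_of_injOn (fun j => j.val - j.val / 3 - 1)
    · intro a ha
      simp only [mem_coe, mem_filter, mem_univ, true_and] at ha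
      have := a.isLt
      simp only [mem_coe, mem_range]
      omega
    · intro a ha b hb hab
      simp only [coe_filter, Set.mem_setOf_eq] at ha hb
      have ha' := ha.2; have hb' := hb.2
      have hab' : a.val - a.val / 3 - 1 = b.val - b.val / 3 - 1 := hab
      apply Fin.ext
      omega
  simpa using this

lemma rdf_weight (m n : ℕ) (hm : 3 ≤ m) (hn : 6 ≤ n) (hn6 : n % 6 = 0) :
    (∑ v : Fin m × Fin n, (rdf m n v).card) ≤ ((m + 2) / 3) * n := by
  classical
  rw [Fintype.sum_prod_type]
  have hcard : ∀ (i : Fin m) (j : Fin n),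
      (rdf m n (i, j)).card = if patB m i.val j.val = true then 1 else 0 := by
    intro i j
    by_cases h : patB m i.val j.val = true <;> simp [rdf, h, colF]
  have key : ∀ i : Fin m, (∑ j : Fin n, (rdf m n (i, j)).card) ≤
      (if i.val < m - m % 3 then n / 3 else if m % 3 = 1 then n
       else if i.val = m - m % 3 then n / 3 else 2 * (n / 3)) := by
    intro i
    have hi := i.isLt
    have hsum : (∑ j : Fin n, (rdf m n (i, j)).card)
        = ((univ : Finset (Fin n)).filter (fun j => patB m i.val j.val = true)).card := by
      rw [Finset.card_filter]
      refine Finset.sum_congr rfl fun j _ => ?_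
      rw [hcard]
    rw [hsum]
    split_ifs with h1 h2 h3
    · refine le_trans (Finset.card_le_card ?_) (row_count_le n (i.val % 3) hn6 hn)
      intro j hj
      simp only [mem_filter, mem_univ, true_and] at hj ⊢
      rw [patB_iff _ _ _ hi] at hj
      omega
    · exact le_trans (Finset.card_filter_le _ _) (by simp)
    · refine le_trans (Finset.card_le_card ?_) (row_count_le n 0 hn6 hn)
      intro j hj
      simp only [mem_filter, mem_univ, true_and] at hj ⊢
      rw [patB_iff _ _ _ hi] at hj
      omega
    · refine le_trans (Finset.card_le_card ?_) (row_count_ne n hn6 hn)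
      intro j hj
      simp only [mem_filter, mem_univ, true_and] at hj ⊢
      rw [patB_iff _ _ _ hi] at hj
      omega
  refine le_trans (Finset.sum_le_sum fun i _ => key i) ?_
  -- now a pure counting estimate
  rw [← Finset.sum_range (fun k => (if k < m - m % 3 then n / 3 else if m % 3 = 1 then n
       else if k = m - m % 3 then n / 3 else 2 * (n / 3)))]
  obtain ⟨s, hs⟩ : 3 ∣ n := by omega
  have h1 : n / 3 = s := by omega
  rcases (show m % 3 = 0 ∨ m % 3 = 1 ∨ m % 3 = 2 by omega) with hr | hr | hr
  · have hb : ∀ k ∈ range m, (if k < m - m % 3 then n / 3 else if m % 3 = 1 then n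
       else if k = m - m % 3 then n / 3 else 2 * (n / 3)) = n / 3 := by
      intro k hk
      simp only [mem_range] at hk
      rw [if_pos (by omega)]
    rw [Finset.sum_congr rfl hb, Finset.sum_const, card_range, smul_eq_mul]
    obtain ⟨a, ha⟩ : 3 ∣ m := by omega
    have h2 : (m + 2) / 3 = a := by omega
    rw [h1, h2, ha, hs]
    exact Nat.le_of_eq (by ring)
  · have hins : range m = insert (m - 1) (range (m - 1)) := by
      rw [← Finset.range_add_one]
      congr 1
      omega
    rw [hins, Finset.sum_insert (by simp)]
    have hb : ∀ k ∈ range (m - 1), (if k < m - m % 3 then n / 3 else if m % 3 = 1 then n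
       else if k = m - m % 3 then n / 3 else 2 * (n / 3)) = n / 3 := by
      intro k hk
      simp only [mem_range] at hk
      rw [if_pos (by omega)]
    rw [Finset.sum_congr rfl hb, Finset.sum_const, card_range, smul_eq_mul]
    rw [if_neg (by omega), if_pos hr]
    obtain ⟨a, ha⟩ : 3 ∣ (m - 1) := by omega
    have h2 : (m + 2) / 3 = a + 1 := by omega
    rw [h1, h2, ha, hs]
    exact Nat.le_of_eq (by ring)
  · have e1 : range m = insert (m - 1) (range (m - 1)) := by
      rw [← Finset.range_add_one]
      congr 1
      omega
    have e2 : range (m - 1) = insert (m - 2) (range (m - 2)) := by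
      rw [← Finset.range_add_one]
      congr 1
      omega
    rw [e1, e2, Finset.sum_insert (by simp only [Finset.mem_insert, Finset.mem_range]; omega), Finset.sum_insert (by simp)]
    have hb : ∀ k ∈ range (m - 2), (if k < m - m % 3 then n / 3 else if m % 3 = 1 then n
       else if k = m - m % 3 then n / 3 else 2 * (n / 3)) = n / 3 := by
      intro k hk
      simp only [mem_range] at hk
      rw [if_pos (by omega)]
    rw [Finset.sum_congr rfl hb, Finset.sum_const, card_range, smul_eq_mul]
    rw [if_neg (by omega), if_neg (by omega), if_neg (by omega)]
    rw [if_neg (by omega), if_neg (by omega), if_pos (by omega)]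
    obtain ⟨a, ha⟩ : 3 ∣ (m - 2) := by omega
    have h2 : (m + 2) / 3 = a + 1 := by omega
    rw [h1, h2, ha, hs]
    exact Nat.le_of_eq (by ring)

lemma myceil (m : ℕ) : ⌈(m : ℚ) / 3⌉ = (((m + 2) / 3 : ℕ) : ℤ) := by
  set q : ℕ := (m + 2) / 3 with hq
  have hC : m ≤ 3 * q := by omega
  have hD : 3 * q < m + 3 := by omega
  have hC' : (m : ℚ) ≤ 3 * q := by exact_mod_cast hC
  have hD' : (3 : ℚ) * q < m + 3 := by exact_mod_cast hD
  rw [Int.ceil_eq_iff]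
  constructor
  · push_cast
    rw [sub_lt_iff_lt_add, div_add' _ _ _ (by norm_num), lt_div_iff₀ (by norm_num : (0:ℚ) < 3)]
    linarith
  · push_cast
    rw [div_le_iff₀ (by norm_num : (0:ℚ) < 3)]
    linarith

theorem two_rainbow_dom_cycles_upper_mod6 (m n : ℕ) (hm : 3 ≤ m) (hn : 6 ≤ n)
    (hn6 : n % 6 = 0) :
    (rainbowDomNum (cycleGraph m □ cycleGraph n) 2 : ℤ) ≤ ⌈(m : ℚ) / 3⌉ * n := by
  have hdom := rdf_dominating m n hm hn hn6
  have hle : rainbowDomNum (cycleGraph m □ cycleGraph n) 2 ≤ ∑ v, (rdf m n v).card :=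
    Nat.sInf_le ⟨rdf m n, hdom, rfl⟩
  have hw := rdf_weight m n hm hn hn6
  calc (rainbowDomNum (cycleGraph m □ cycleGraph n) 2 : ℤ)
      ≤ ((∑ v, (rdf m n v).card : ℕ) : ℤ) := by exact_mod_cast hle
    _ ≤ ((((m + 2) / 3) * n : ℕ) : ℤ) := by exact_mod_cast hw
    _ = ⌈(m : ℚ) / 3⌉ * n := by rw [myceil]; push_cast; ring
end
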